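/- arXiv:1408.0143 — 6 statements merged into one kernel-verified Lean document; each statement's English description precedes it below -/
import Mathlib

section
/- Let F be a field, N a natural number, V an (N+1)-dimensional vector space over F, and B a Billiard Array on V. Let 0 ≤ n ≤ N and let μ be a triple of natural numbers with coordinate sum N − n. Define B_μ = ∑ B_λ, the sum over all λ ∈ Δ_N with μ ≤ λ componentwise. Then for each ξ ∈ {1,2,3}, B_μ equals the sum of the subspaces B_{μ+ν} over the elements ν of Δ_n with ξ-coordinate 0, this sum is direct, and B_μ has dimension n + 1. -/
/-- `Δ_N`: the set of triples of natural numbers with sum `N`. -/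
def BA.Delta (N : ℕ) : Set (Fin 3 → ℕ) := {v | v 0 + v 1 + v 2 = N}

/-- A line in `Δ_N`: the set of locations with a given `η`-coordinate `c`. -/
def BA.IsLine (N : ℕ) (L : Set (Fin 3 → ℕ)) : Prop :=
  ∃ (η : Fin 3) (c : ℕ), c ≤ N ∧ L = {v ∈ BA.Delta N | v η = c}

/-- The black 3-clique attached to `(r,s,t)`. -/
def BA.blackSet (r s t : ℕ) : Set (Fin 3 → ℕ) :=
  {![r + 1, s, t], ![r, s + 1, t], ![r, s, t + 1]}

/-- A Billiard Array on `V`: a function assigning to each location of `Δ_N` a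
one-dimensional subspace of `V`, such that the sum over each line is direct and
the sum over each black 3-clique is not direct. -/
def BA.IsBilliardArray {F V : Type*} [Field F] [AddCommGroup V] [Module F V]
    (N : ℕ) (B : (Fin 3 → ℕ) → Submodule F V) : Prop :=
  (∀ v ∈ BA.Delta N, Module.finrank F (B v) = 1) ∧
  (∀ L : Set (Fin 3 → ℕ), BA.IsLine N L → iSupIndep fun x : L => B x.1) ∧
  (∀ r s t : ℕ, r + s + t + 1 = N → ¬ iSupIndep fun x : BA.blackSet r s t => B x.1)

open Module Submodule Set

section Aux
variable {F V : Type*} [Field F] [AddCommGroup V] [Module F V]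

/-- A 1-dimensional submodule that is not disjoint from `D` is contained in `D`. -/
lemma BAaux.le_of_not_disjoint [FiniteDimensional F V] {A D : Submodule F V}
    (hA : finrank F A = 1) (h : ¬ Disjoint A D) : A ≤ D := by
  rw [disjoint_iff] at h
  have h1 : 1 ≤ finrank F (A ⊓ D : Submodule F V) := by
    by_contra hc
    exact h (Submodule.finrank_eq_zero.mp (by omega))
  have : A ⊓ D = A := Submodule.eq_of_le_of_finrank_le inf_le_left (by omega)
  calc A = A ⊓ D := this.symm
    _ ≤ D := inf_le_right

/-- Swap lemma: if `A ≤ B ⊔ C`, `A` nonzero disjoint from `C`, and `B` is 1-dimensional,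
then `B ≤ A ⊔ C`. -/
lemma BAaux.swap_le [FiniteDimensional F V] {A B C : Submodule F V}
    (hA : A ≠ ⊥) (hB : finrank F B = 1) (hAC : Disjoint A C) (h : A ≤ B ⊔ C) :
    B ≤ A ⊔ C := by
  obtain ⟨u, huA, hu0⟩ := A.ne_bot_iff.mp hA
  obtain ⟨v, hvB, w, hwC, hvw⟩ := Submodule.mem_sup.mp (h huA)
  have hv0 : v ≠ 0 := by
    rintro rfl
    rw [zero_add] at hvw
    exact hu0 ((Submodule.disjoint_def.mp hAC) u huA (hvw ▸ hwC))
  have hspan : (F ∙ v) = B :=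
    Submodule.eq_of_le_of_finrank_le
      ((Submodule.span_singleton_le_iff_mem v B).mpr hvB)
      (by rw [finrank_span_singleton hv0]; omega)
  rw [← hspan, Submodule.span_singleton_le_iff_mem]
  have : v = u - w := by rw [← hvw]; abel
  rw [this]
  exact sub_mem (Submodule.mem_sup_left huA) (Submodule.mem_sup_right hwC)

/-- Distinct locations on a common line have disjoint subspaces. -/
lemma BAaux.line_disjoint {N : ℕ} {B : (Fin 3 → ℕ) → Submodule F V}
    (hB : BA.IsBilliardArray N B) {x y : Fin 3 → ℕ} (hx : x ∈ BA.Delta N)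
    (hy : y ∈ BA.Delta N) (η : Fin 3) (hxy : x η = y η) (hne : x ≠ y) :
    Disjoint (B x) (B y) := by
  have h3 : ∀ k : Fin 3, k = 0 ∨ k = 1 ∨ k = 2 := by decide
  have hc : x η ≤ N := by
    have hx' : x 0 + x 1 + x 2 = N := hx
    rcases h3 η with h | h | h <;> subst h <;> omega
  have hL := hB.2.1 {v ∈ BA.Delta N | v η = x η} ⟨η, x η, hc, rfl⟩
  have hne' : (⟨x, ⟨hx, rfl⟩⟩ : {v ∈ BA.Delta N | v η = x η}) ≠ ⟨y, ⟨hy, hxy.symm⟩⟩ := by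
    intro hcon
    exact hne (congrArg Subtype.val hcon)
  exact hL.pairwiseDisjoint hne'

/-- Each subspace of a black clique lies in the join of the other two. -/
lemma BAaux.black_le [FiniteDimensional F V] {N : ℕ} {B : (Fin 3 → ℕ) → Submodule F V}
    (hB : BA.IsBilliardArray N B) (r s t : ℕ) (h : r + s + t + 1 = N) :
    B ![r + 1, s, t] ≤ B ![r, s + 1, t] ⊔ B ![r, s, t + 1] ∧
    B ![r, s + 1, t] ≤ B ![r + 1, s, t] ⊔ B ![r, s, t + 1] ∧
    B ![r, s, t + 1] ≤ B ![r + 1, s, t] ⊔ B ![r, s + 1, t] := by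
  set a : Fin 3 → ℕ := ![r + 1, s, t] with ha_def
  set b : Fin 3 → ℕ := ![r, s + 1, t] with hb_def
  set c : Fin 3 → ℕ := ![r, s, t + 1] with hc_def
  have ha : a ∈ BA.Delta N := by show a 0 + a 1 + a 2 = N; simp [ha_def]; omega
  have hb : b ∈ BA.Delta N := by show b 0 + b 1 + b 2 = N; simp [hb_def]; omega
  have hc : c ∈ BA.Delta N := by show c 0 + c 1 + c 2 = N; simp [hc_def]; omega
  have d1 : finrank F (B a) = 1 := hB.1 a ha
  have d2 : finrank F (B b) = 1 := hB.1 b hb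
  have d3 : finrank F (B c) = 1 := hB.1 c hc
  have na : B a ≠ ⊥ := by intro hcon; rw [hcon, finrank_bot] at d1; omega
  have nb : B b ≠ ⊥ := by intro hcon; rw [hcon, finrank_bot] at d2; omega
  have nc : B c ≠ ⊥ := by intro hcon; rw [hcon, finrank_bot] at d3; omega
  have neab : a ≠ b := by
    intro hcon; have := congrFun hcon 0; simp [ha_def, hb_def] at this
  have neac : a ≠ c := by
    intro hcon; have := congrFun hcon 0; simp [ha_def, hc_def] at this
  have nebc : b ≠ c := by
    intro hcon; have := congrFun hcon 1; simp [hb_def, hc_def] at this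
  have hab : Disjoint (B a) (B b) :=
    BAaux.line_disjoint hB ha hb 2 (by simp [ha_def, hb_def]) neab
  have hac : Disjoint (B a) (B c) :=
    BAaux.line_disjoint hB ha hc 1 (by simp [ha_def, hc_def]) neac
  have hbc : Disjoint (B b) (B c) :=
    BAaux.line_disjoint hB hb hc 0 (by simp [hb_def, hc_def]) nebc
  have key := hB.2.2 r s t h
  have hma : a ∈ BA.blackSet r s t := Set.mem_insert _ _
  have hmb : b ∈ BA.blackSet r s t := Set.mem_insert_of_mem _ (Set.mem_insert _ _)
  have hmc : c ∈ BA.blackSet r s t :=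
    Set.mem_insert_of_mem _ (Set.mem_insert_of_mem _ rfl)
  have main : (¬ Disjoint (B a) (B b ⊔ B c)) ∨ (¬ Disjoint (B b) (B a ⊔ B c)) ∨
      (¬ Disjoint (B c) (B a ⊔ B b)) := by
    by_contra hcon
    push_neg at hcon
    obtain ⟨Da, Db, Dc⟩ := hcon
    apply key
    rintro ⟨i, hi⟩
    have hsup : ∀ (D1 D2 : Submodule F V), (∀ j : BA.blackSet r s t,
        j ≠ (⟨i, hi⟩ : BA.blackSet r s t) → B j.1 ≤ D1 ⊔ D2) →
        (⨆ (j : BA.blackSet r s t) (_ : j ≠ ⟨i, hi⟩), B j.1) ≤ D1 ⊔ D2 :=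
      fun D1 D2 hj => iSup_le fun j => iSup_le fun hne => hj j hne
    rcases hi with rfl | rfl | hi
    · refine Da.mono_right (hsup _ _ ?_)
      rintro ⟨j, hj⟩ hne
      rcases hj with rfl | rfl | hj
      · exact absurd rfl hne
      · exact le_sup_left
      · simp only [Set.mem_singleton_iff] at hj; subst hj; exact le_sup_right
    · refine Db.mono_right (hsup _ _ ?_)
      rintro ⟨j, hj⟩ hne
      rcases hj with rfl | rfl | hj
      · exact le_sup_left
      · exact absurd rfl hne
      · simp only [Set.mem_singleton_iff] at hj; subst hj; exact le_sup_right
    · simp only [Set.mem_singleton_iff] at hi; subst hi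
      refine Dc.mono_right (hsup _ _ ?_)
      rintro ⟨j, hj⟩ hne
      rcases hj with rfl | rfl | hj
      · exact le_sup_left
      · exact le_sup_right
      · simp only [Set.mem_singleton_iff] at hj; subst hj; exact absurd rfl hne
  rcases main with hnd | hnd | hnd
  · have la : B a ≤ B b ⊔ B c := BAaux.le_of_not_disjoint d1 hnd
    have lb : B b ≤ B a ⊔ B c := BAaux.swap_le na d2 hac la
    have lc : B c ≤ B a ⊔ B b := BAaux.swap_le na d3 hab (by rwa [sup_comm] at la)
    exact ⟨la, lb, lc⟩
  · have lb : B b ≤ B a ⊔ B c := BAaux.le_of_not_disjoint d2 hnd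
    have la : B a ≤ B b ⊔ B c := BAaux.swap_le nb d1 hbc lb
    have lc : B c ≤ B b ⊔ B a := BAaux.swap_le nb d3 hab.symm (by rwa [sup_comm] at lb)
    exact ⟨la, lb, by rwa [sup_comm] at lc⟩
  · have lc : B c ≤ B a ⊔ B b := BAaux.le_of_not_disjoint d3 hnd
    have la : B a ≤ B c ⊔ B b := BAaux.swap_le nc d1 hbc.symm lc
    have lb : B b ≤ B c ⊔ B a := BAaux.swap_le nc d2 hac.symm (by rwa [sup_comm] at lc)
    exact ⟨by rwa [sup_comm] at la, by rwa [sup_comm] at lb, lc⟩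

/-- Pushing step: a location above `μ` with positive `ξ`-coordinate offset lies in the join of
two locations whose `ξ`-coordinate offset is one smaller. -/
lemma BAaux.step [FiniteDimensional F V] {N n : ℕ} {B : (Fin 3 → ℕ) → Submodule F V}
    (hB : BA.IsBilliardArray N B) (hn : n ≤ N) {μ : Fin 3 → ℕ}
    (hμ : μ 0 + μ 1 + μ 2 = N - n) (ξ : Fin 3) {ν : Fin 3 → ℕ}
    (hν : ν ∈ BA.Delta n) (hpos : 0 < ν ξ) :
    ∃ ν₁ ν₂ : Fin 3 → ℕ, ν₁ ∈ BA.Delta n ∧ ν₂ ∈ BA.Delta n ∧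
      ν₁ ξ = ν ξ - 1 ∧ ν₂ ξ = ν ξ - 1 ∧ B (μ + ν) ≤ B (μ + ν₁) ⊔ B (μ + ν₂) := by
  have hν' : ν 0 + ν 1 + ν 2 = n := hν
  have k3 : ∀ k : Fin 3, k = 0 ∨ k = 1 ∨ k = 2 := by decide
  rcases k3 ξ with rfl | rfl | rfl
  · have h : (μ 0 + ν 0 - 1) + (μ 1 + ν 1) + (μ 2 + ν 2) + 1 = N := by omega
    have black := (BAaux.black_le hB _ _ _ h).1
    have e0 : μ + ν = ![(μ 0 + ν 0 - 1) + 1, μ 1 + ν 1, μ 2 + ν 2] := by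
      funext k; rcases k3 k with rfl | rfl | rfl <;> simp [Pi.add_apply] <;> omega
    have e1 : μ + ![ν 0 - 1, ν 1 + 1, ν 2]
        = ![μ 0 + ν 0 - 1, (μ 1 + ν 1) + 1, μ 2 + ν 2] := by
      funext k; rcases k3 k with rfl | rfl | rfl <;> simp [Pi.add_apply] <;> omega
    have e2 : μ + ![ν 0 - 1, ν 1, ν 2 + 1]
        = ![μ 0 + ν 0 - 1, μ 1 + ν 1, (μ 2 + ν 2) + 1] := by
      funext k; rcases k3 k with rfl | rfl | rfl <;> simp [Pi.add_apply] <;> omega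
    refine ⟨![ν 0 - 1, ν 1 + 1, ν 2], ![ν 0 - 1, ν 1, ν 2 + 1], ?_, ?_, ?_, ?_, ?_⟩
    · show _ + _ + _ = n; simp; omega
    · show _ + _ + _ = n; simp; omega
    · simp
    · simp
    · rw [e0, e1, e2]; exact black
  · have h : (μ 0 + ν 0) + (μ 1 + ν 1 - 1) + (μ 2 + ν 2) + 1 = N := by omega
    have black := (BAaux.black_le hB _ _ _ h).2.1
    have e0 : μ + ν = ![μ 0 + ν 0, (μ 1 + ν 1 - 1) + 1, μ 2 + ν 2] := by
      funext k; rcases k3 k with rfl | rfl | rfl <;> simp [Pi.add_apply] <;> omega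
    have e1 : μ + ![ν 0 + 1, ν 1 - 1, ν 2]
        = ![(μ 0 + ν 0) + 1, μ 1 + ν 1 - 1, μ 2 + ν 2] := by
      funext k; rcases k3 k with rfl | rfl | rfl <;> simp [Pi.add_apply] <;> omega
    have e2 : μ + ![ν 0, ν 1 - 1, ν 2 + 1]
        = ![μ 0 + ν 0, μ 1 + ν 1 - 1, (μ 2 + ν 2) + 1] := by
      funext k; rcases k3 k with rfl | rfl | rfl <;> simp [Pi.add_apply] <;> omega
    refine ⟨![ν 0 + 1, ν 1 - 1, ν 2], ![ν 0, ν 1 - 1, ν 2 + 1], ?_, ?_, ?_, ?_, ?_⟩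
    · show _ + _ + _ = n; simp; omega
    · show _ + _ + _ = n; simp; omega
    · simp
    · simp
    · rw [e0, e1, e2]; exact black
  · have h : (μ 0 + ν 0) + (μ 1 + ν 1) + (μ 2 + ν 2 - 1) + 1 = N := by omega
    have black := (BAaux.black_le hB _ _ _ h).2.2
    have e0 : μ + ν = ![μ 0 + ν 0, μ 1 + ν 1, (μ 2 + ν 2 - 1) + 1] := by
      funext k; rcases k3 k with rfl | rfl | rfl <;> simp [Pi.add_apply] <;> omega
    have e1 : μ + ![ν 0 + 1, ν 1, ν 2 - 1]
        = ![(μ 0 + ν 0) + 1, μ 1 + ν 1, μ 2 + ν 2 - 1] := by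
      funext k; rcases k3 k with rfl | rfl | rfl <;> simp [Pi.add_apply] <;> omega
    have e2 : μ + ![ν 0, ν 1 + 1, ν 2 - 1]
        = ![μ 0 + ν 0, (μ 1 + ν 1) + 1, μ 2 + ν 2 - 1] := by
      funext k; rcases k3 k with rfl | rfl | rfl <;> simp [Pi.add_apply] <;> omega
    refine ⟨![ν 0 + 1, ν 1, ν 2 - 1], ![ν 0, ν 1 + 1, ν 2 - 1], ?_, ?_, ?_, ?_, ?_⟩
    · show _ + _ + _ = n; simp; omega
    · show _ + _ + _ = n; simp; omega
    · simp
    · simp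
    · rw [e0, e1, e2]; exact black

end Aux

/-- For a Billiard Array `B` on `V`, `0 ≤ n ≤ N`, and `μ` a triple with
coordinate sum `N - n`, let `B_μ` be the sum of the `B_λ` over locations
`λ ≥ μ` componentwise. Then for each `ξ ∈ {1,2,3}`, `B_μ` equals the (direct)
sum of the subspaces `B_{μ+ν}` over the `ν ∈ Δ_n` with `ξ`-coordinate `0`, and
`B_μ` has dimension `n + 1`. -/
theorem stmt14 {F V : Type*} [Field F] [AddCommGroup V] [Module F V] (N : ℕ)
    (hV : Module.finrank F V = N + 1) (B : (Fin 3 → ℕ) → Submodule F V)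
    (hB : BA.IsBilliardArray N B)
    (n : ℕ) (hn : n ≤ N) (μ : Fin 3 → ℕ) (hμ : μ 0 + μ 1 + μ 2 = N - n) :
    ∀ ξ : Fin 3,
      (⨆ v ∈ {w | w ∈ BA.Delta N ∧ ∀ k, μ k ≤ w k}, B v) =
        (⨆ ν ∈ {w | w ∈ BA.Delta n ∧ w ξ = 0}, B (μ + ν)) ∧
      (iSupIndep fun ν : {w | w ∈ BA.Delta n ∧ w ξ = 0} => B (μ + ν.1)) ∧
      Module.finrank F
        ↥(⨆ v ∈ {w | w ∈ BA.Delta N ∧ ∀ k, μ k ≤ w k}, B v) = n + 1 := by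
  have hFD : FiniteDimensional F V := Module.finite_of_finrank_pos (by omega)
  intro ξ
  have k3 : ∀ k : Fin 3, k = 0 ∨ k = 1 ∨ k = 2 := by decide
  have t1 : ∀ η : Fin 3, η + 1 ≠ η := by decide
  have t2 : ∀ η : Fin 3, η + 2 ≠ η := by decide
  have t3 : ∀ η : Fin 3, η + 2 ≠ η + 1 := by decide
  have kp : ∀ η k : Fin 3, k = η ∨ k = η + 1 ∨ k = η + 2 := by decide
  have hμ' : μ 0 + μ 1 + μ 2 = N - n := hμ
  have hmem : ∀ ν ∈ BA.Delta n, μ + ν ∈ BA.Delta N := by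
    intro ν hν
    have hν' : ν 0 + ν 1 + ν 2 = n := hν
    show (μ + ν) 0 + (μ + ν) 1 + (μ + ν) 2 = N
    simp only [Pi.add_apply]
    omega
  have main_le : ∀ m : ℕ, ∀ ν ∈ BA.Delta n, ν ξ ≤ m →
      B (μ + ν) ≤ ⨆ ν' ∈ {w | w ∈ BA.Delta n ∧ w ξ = 0}, B (μ + ν') := by
    intro m
    induction m with
    | zero =>
      intro ν hν h0
      exact le_iSup₂ (f := fun ν' (_ : ν' ∈ {w | w ∈ BA.Delta n ∧ w ξ = 0}) => B (μ + ν'))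
        ν ⟨hν, Nat.le_zero.mp h0⟩
    | succ m ih =>
      intro ν hν h0
      by_cases hle : ν ξ ≤ m
      · exact ih ν hν hle
      · have hpos : 0 < ν ξ := by omega
        obtain ⟨ν₁, ν₂, h1, h2, e1, e2, hle'⟩ := BAaux.step hB hn hμ ξ hν hpos
        exact hle'.trans (sup_le (ih ν₁ h1 (by omega)) (ih ν₂ h2 (by omega)))
  have sum3 : ∀ w : Fin 3 → ℕ, w ξ + w (ξ + 1) + w (ξ + 2) = w 0 + w 1 + w 2 := by
    intro w
    rcases k3 ξ with rfl | rfl | rfl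
    · show w 0 + w 1 + w 2 = _; ring
    · show w 1 + w 2 + w 0 = _; ring
    · show w 2 + w 0 + w 1 = _; ring
  have heq : (⨆ v ∈ {w | w ∈ BA.Delta N ∧ ∀ k, μ k ≤ w k}, B v) =
      ⨆ ν ∈ {w | w ∈ BA.Delta n ∧ w ξ = 0}, B (μ + ν) := by
    apply le_antisymm
    · refine iSup₂_le fun v hv => ?_
      obtain ⟨hvD, hvge⟩ := hv
      have hv' : v 0 + v 1 + v 2 = N := hvD
      have hνD : (fun k => v k - μ k) ∈ BA.Delta n := by
        show (v 0 - μ 0) + (v 1 - μ 1) + (v 2 - μ 2) = n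
        have g0 := hvge 0; have g1 := hvge 1; have g2 := hvge 2
        omega
      have hμν : μ + (fun k => v k - μ k) = v := by
        funext k; have := hvge k
        show μ k + (v k - μ k) = v k
        omega
      have hbound : (fun k => v k - μ k) ξ ≤ n := by
        have hν' : (v 0 - μ 0) + (v 1 - μ 1) + (v 2 - μ 2) = n := hνD
        show v ξ - μ ξ ≤ n
        rcases k3 ξ with rfl | rfl | rfl <;> omega
      rw [← hμν]
      exact main_le n _ hνD hbound
    · refine iSup₂_le fun ν hν => ?_
      exact le_iSup₂_of_le (μ + ν) ⟨hmem ν hν.1, fun k => Nat.le_add_right _ _⟩ le_rfl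
  have hμξN : μ ξ ≤ N := by rcases k3 ξ with rfl | rfl | rfl <;> omega
  have hL := hB.2.1 {v ∈ BA.Delta N | v ξ = μ ξ} ⟨ξ, μ ξ, hμξN, rfl⟩
  have hindep : iSupIndep fun ν : {w | w ∈ BA.Delta n ∧ w ξ = 0} => B (μ + ν.1) := by
    have hinj : Function.Injective fun ν : {w | w ∈ BA.Delta n ∧ w ξ = 0} =>
        (⟨μ + ν.1, ⟨hmem ν.1 ν.2.1, by show μ ξ + ν.1 ξ = μ ξ; rw [ν.2.2, Nat.add_zero]⟩⟩ :
          {v ∈ BA.Delta N | v ξ = μ ξ}) := by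
      rintro a b hab
      apply Subtype.ext
      exact add_left_cancel (congrArg Subtype.val hab)
    exact hL.comp hinj
  refine ⟨heq, hindep, ?_⟩
  -- enumeration of the ξ-face of Δ_n
  set eν : Fin (n + 1) → Fin 3 → ℕ :=
    fun i k => if k = ξ then 0 else if k = ξ + 1 then (i : ℕ) else n - (i : ℕ) with heν_def
  have heν : ∀ i : Fin (n + 1),
      (eν i) ξ = 0 ∧ (eν i) (ξ + 1) = (i : ℕ) ∧ (eν i) (ξ + 2) = n - (i : ℕ) := by
    intro i
    refine ⟨by simp [heν_def], by simp [heν_def, t1 ξ], by simp [heν_def, t2 ξ, t3 ξ]⟩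
  have hdelta : ∀ i : Fin (n + 1), eν i ∈ BA.Delta n := by
    intro i
    show (eν i) 0 + (eν i) 1 + (eν i) 2 = n
    rw [← sum3 (eν i), (heν i).1, (heν i).2.1, (heν i).2.2]
    have := i.isLt
    omega
  have hrange : {w | w ∈ BA.Delta n ∧ w ξ = 0} = Set.range eν := by
    ext w
    constructor
    · rintro ⟨hw1, hw2⟩
      have hw' : w 0 + w 1 + w 2 = n := hw1
      have hsum := sum3 w
      have hlt : w (ξ + 1) < n + 1 := by omega
      refine ⟨⟨w (ξ + 1), hlt⟩, ?_⟩
      funext k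
      rcases kp ξ k with rfl | rfl | rfl
      · rw [(heν _).1, hw2]
      · rw [(heν _).2.1]
      · rw [(heν _).2.2]
        show n - w (ξ + 1) = w (ξ + 2)
        omega
    · rintro ⟨i, rfl⟩
      exact ⟨hdelta i, (heν i).1⟩
  have heq2 : (⨆ ν ∈ {w | w ∈ BA.Delta n ∧ w ξ = 0}, B (μ + ν)) =
      ⨆ i : Fin (n + 1), B (μ + eν i) := by
    rw [hrange, iSup_range]
  have hindep' : iSupIndep fun i : Fin (n + 1) => B (μ + eν i) := by
    have hinj : Function.Injective fun i : Fin (n + 1) =>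
        (⟨μ + eν i, ⟨hmem _ (hdelta i), by show μ ξ + (eν i) ξ = μ ξ; rw [(heν i).1, Nat.add_zero]⟩⟩ :
          {v ∈ BA.Delta N | v ξ = μ ξ}) := by
      intro a b hab
      have h1 : μ + eν a = μ + eν b := congrArg Subtype.val hab
      have h2 : eν a = eν b := add_left_cancel h1
      have h3 := congrFun h2 (ξ + 1)
      rw [(heν a).2.1, (heν b).2.1] at h3
      exact Fin.ext h3
    exact hL.comp hinj
  have hdim : ∀ i : Fin (n + 1), Module.finrank F (B (μ + eν i)) = 1 :=
    fun i => hB.1 _ (hmem _ (hdelta i))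
  have hex : ∀ i : Fin (n + 1), ∃ x, x ∈ B (μ + eν i) ∧ x ≠ 0 := by
    intro i
    apply (B (μ + eν i)).ne_bot_iff.mp
    intro hcon
    have := hdim i
    rw [hcon, finrank_bot] at this
    omega
  choose u hu1 hu2 using hex
  have hspan : ∀ i, (F ∙ u i) = B (μ + eν i) := fun i =>
    Submodule.eq_of_le_of_finrank_le
      ((Submodule.span_singleton_le_iff_mem _ _).mpr (hu1 i))
      (by rw [finrank_span_singleton (hu2 i), hdim i])
  have hli : LinearIndependent F u := iSupIndep.linearIndependent _ hindep' hu1 hu2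
  have hT : (⨆ i : Fin (n + 1), B (μ + eν i)) = span F (Set.range u) := by
    rw [span_range_eq_iSup]
    exact (iSup_congr hspan).symm
  rw [heq, heq2, hT, finrank_span_eq_card hli, Fintype.card_fin]
end

section
/- Let F be a field, N a natural number, V an (N+1)-dimensional vector space over F, and B a Billiard Array on V. Pick η ∈ {1,2,3} and let S be a subset of Δ_N such that distinct elements of S have distinct η-coordinates (S is η-geodesic). Then the sum ∑_{λ∈S} B_λ is direct, i.e., the family of subspaces (B_λ)_{λ∈S} is independent. -/
open Module Submodule

namespace BAx

def T (η : Fin 3) (x y z : ℕ) : Fin 3 → ℕ :=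
  fun i => if i = η then x else if i = η + 1 then y else z

lemma T_app0 (η : Fin 3) (x y z : ℕ) : T η x y z η = x := by simp [T]

lemma T_app1 (η : Fin 3) (x y z : ℕ) : T η x y z (η + 1) = y := by
  fin_cases η <;> rfl

lemma T_app2 (η : Fin 3) (x y z : ℕ) : T η x y z (η + 2) = z := by
  fin_cases η <;> rfl

lemma T_sum (η : Fin 3) (x y z : ℕ) :
    T η x y z 0 + T η x y z 1 + T η x y z 2 = x + y + z := by
  fin_cases η <;> simp [T] <;> omega

lemma T_rotate (η : Fin 3) (x y z : ℕ) : T (η + 1) x y z = T η z x y := by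
  funext i; fin_cases η <;> fin_cases i <;> rfl

lemma eq_T (η : Fin 3) (v : Fin 3 → ℕ) : v = T η (v η) (v (η + 1)) (v (η + 2)) := by
  funext i; fin_cases η <;> fin_cases i <;> rfl

lemma T_mem_Delta {N : ℕ} (η : Fin 3) (x y z : ℕ) :
    T η x y z ∈ BA.Delta N ↔ x + y + z = N := by
  unfold BA.Delta; rw [Set.mem_setOf_eq, T_sum]

end BAx
namespace BAx

variable {F V : Type*} [Field F] [AddCommGroup V] [Module F V]

lemma le_of_not_disjoint [FiniteDimensional F V] {p M : Submodule F V}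
    (hp : Module.finrank F p = 1) (h : ¬ Disjoint p M) : p ≤ M := by
  rw [Submodule.disjoint_def] at h
  push_neg at h
  obtain ⟨x, hxp, hxM, hx0⟩ := h
  have hle : (F ∙ x) ≤ p := by
    rw [Submodule.span_singleton_le_iff_mem]; exact hxp
  have : (F ∙ x) = p := by
    apply Submodule.eq_of_le_of_finrank_le hle
    rw [hp, finrank_span_singleton hx0]
  rw [← this, Submodule.span_singleton_le_iff_mem]; exact hxM

lemma ne_bot_of_finrank_one {p : Submodule F V} (hp : Module.finrank F p = 1) :
    p ≠ ⊥ := by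
  intro h; rw [h, finrank_bot] at hp; exact one_ne_zero hp.symm

/-- symmetrization step -/
lemma sym3 [FiniteDimensional F V] {p q r : Submodule F V}
    (hp : Module.finrank F p = 1) (hq : Module.finrank F q = 1)
    (hpr : Disjoint p r) (h : p ≤ q ⊔ r) : q ≤ p ⊔ r := by
  obtain ⟨x, hxp, hx0⟩ := Submodule.exists_mem_ne_zero_of_ne_bot (ne_bot_of_finrank_one hp)
  obtain ⟨y, hy, z, hz, hxyz⟩ := Submodule.mem_sup.mp (h hxp)
  have hy0 : y ≠ 0 := by
    rintro rfl
    rw [zero_add] at hxyz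
    exact hx0 ((Submodule.mem_bot F).mp (hpr.le_bot ⟨hxp, hxyz ▸ hz⟩))
  apply le_of_not_disjoint hq
  rw [Submodule.disjoint_def]
  push_neg
  refine ⟨y, hy, ?_, hy0⟩
  have : y = x - z := by rw [← hxyz]; abel
  rw [this]
  exact Submodule.sub_mem _ (Submodule.mem_sup_left hxp) (Submodule.mem_sup_right hz)

end BAx
namespace BAx

variable {F V : Type*} [Field F] [AddCommGroup V] [Module F V]
variable {N : ℕ} {B : (Fin 3 → ℕ) → Submodule F V}

lemma coord_le {v : Fin 3 → ℕ} (hv : v ∈ BA.Delta N) (η : Fin 3) : v η ≤ N := by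
  have h : v 0 + v 1 + v 2 = N := hv
  fin_cases η
  · exact (by omega : v 0 ≤ N)
  · exact (by omega : v 1 ≤ N)
  · exact (by omega : v 2 ≤ N)

lemma pair_disjoint (hB : BA.IsBilliardArray N B) {v w : Fin 3 → ℕ}
    (hv : v ∈ BA.Delta N) (hw : w ∈ BA.Delta N) (hne : v ≠ w) {η : Fin 3}
    (h : v η = w η) : Disjoint (B v) (B w) := by
  have hL : BA.IsLine N {x ∈ BA.Delta N | x η = v η} :=
    ⟨η, v η, coord_le hv η, rfl⟩
  have hind := hB.2.1 _ hL
  have hvm : v ∈ {x ∈ BA.Delta N | x η = v η} := ⟨hv, rfl⟩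
  have hwm : w ∈ {x ∈ BA.Delta N | x η = v η} := ⟨hw, h.symm⟩
  have hne' : (⟨v, hvm⟩ : {x ∈ BA.Delta N | x η = v η}) ≠ ⟨w, hwm⟩ :=
    fun hc => hne (congrArg Subtype.val hc)
  exact hind.pairwiseDisjoint hne'

lemma black_le [FiniteDimensional F V] (hB : BA.IsBilliardArray N B) {r s t : ℕ}
    (hN : r + s + t + 1 = N) :
    B ![r+1, s, t] ≤ B ![r, s+1, t] ⊔ B ![r, s, t+1] ∧
    B ![r, s+1, t] ≤ B ![r+1, s, t] ⊔ B ![r, s, t+1] ∧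
    B ![r, s, t+1] ≤ B ![r+1, s, t] ⊔ B ![r, s+1, t] := by
  set a : Fin 3 → ℕ := ![r+1, s, t] with ha
  set b : Fin 3 → ℕ := ![r, s+1, t] with hb
  set c : Fin 3 → ℕ := ![r, s, t+1] with hc
  have haD : a ∈ BA.Delta N := by simp [ha, BA.Delta]; omega
  have hbD : b ∈ BA.Delta N := by simp [hb, BA.Delta]; omega
  have hcD : c ∈ BA.Delta N := by simp [hc, BA.Delta]; omega
  have hab : a ≠ b := fun h => by have := congrFun h 0; simp [ha, hb] at this
  have hac : a ≠ c := fun h => by have := congrFun h 0; simp [ha, hc] at this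
  have hbc : b ≠ c := fun h => by have := congrFun h 1; simp [hb, hc] at this
  have Dab : Disjoint (B a) (B b) := pair_disjoint hB haD hbD hab (η := 2) rfl
  have Dac : Disjoint (B a) (B c) := pair_disjoint hB haD hcD hac (η := 1) rfl
  have Dbc : Disjoint (B b) (B c) := pair_disjoint hB hbD hcD hbc (η := 0) rfl
  have fra : Module.finrank F (B a) = 1 := hB.1 a haD
  have frb : Module.finrank F (B b) = 1 := hB.1 b hbD
  have frc : Module.finrank F (B c) = 1 := hB.1 c hcD
  have hnind := hB.2.2 r s t hN
  rw [iSupIndep_def] at hnind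
  push_neg at hnind
  obtain ⟨i, hi⟩ := hnind
  have hmem : i.1 = a ∨ i.1 = b ∨ i.1 = c := i.2
  have key : B a ≤ B b ⊔ B c ∨ B b ≤ B a ⊔ B c ∨ B c ≤ B a ⊔ B b := by
    rcases hmem with h1 | h1 | h1
    · left
      apply le_of_not_disjoint fra
      intro hd; apply hi; rw [h1]
      refine hd.mono_right (iSup_le fun j => iSup_le fun hj => ?_)
      rcases j.2 with h2 | h2 | h2
      · exact absurd (Subtype.ext (h2.trans h1.symm)) hj
      · exact h2 ▸ le_sup_left
      · exact h2 ▸ le_sup_right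
    · right; left
      apply le_of_not_disjoint frb
      intro hd; apply hi; rw [h1]
      refine hd.mono_right (iSup_le fun j => iSup_le fun hj => ?_)
      rcases j.2 with h2 | h2 | h2
      · exact h2 ▸ le_sup_left
      · exact absurd (Subtype.ext (h2.trans h1.symm)) hj
      · exact h2 ▸ le_sup_right
    · right; right
      apply le_of_not_disjoint frc
      intro hd; apply hi; rw [h1]
      refine hd.mono_right (iSup_le fun j => iSup_le fun hj => ?_)
      rcases j.2 with h2 | h2 | h2
      · exact h2 ▸ le_sup_left
      · exact h2 ▸ le_sup_right
      · exact absurd (Subtype.ext (h2.trans h1.symm)) hj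
  rcases key with h | h | h
  · have h' : B a ≤ B c ⊔ B b := by rwa [sup_comm] at h
    exact ⟨h, sym3 fra frb Dac h, sym3 fra frc Dab h'⟩
  · have h' : B b ≤ B c ⊔ B a := by rwa [sup_comm] at h
    have h3 : B c ≤ B b ⊔ B a := sym3 frb frc Dab.symm h'
    rw [sup_comm] at h3
    exact ⟨sym3 frb fra Dbc h, h, h3⟩
  · have h1 : B a ≤ B c ⊔ B b := sym3 frc fra Dbc.symm h
    rw [sup_comm] at h1
    have h' : B c ≤ B b ⊔ B a := by rwa [sup_comm] at h
    have h2 : B b ≤ B c ⊔ B a := sym3 frc frb Dac.symm h'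
    rw [sup_comm] at h2
    exact ⟨h1, h2, h⟩

end BAx
namespace BAx

variable {F V : Type*} [Field F] [AddCommGroup V] [Module F V]
variable {N : ℕ} {B : (Fin 3 → ℕ) → Submodule F V}

lemma black_T [FiniteDimensional F V] (hB : BA.IsBilliardArray N B)
    (η : Fin 3) {a b c : ℕ} (h : a + b + c + 1 = N) :
    B (T η (a+1) b c) ≤ B (T (η+1) (b+1) c a) ⊔ B (T (η+2) (c+1) a b) := by
  fin_cases η
  · have e1 : T 0 (a+1) b c = ![a+1, b, c] := by funext i; fin_cases i <;> rfl
    have e2 : T 1 (b+1) c a = ![a, b+1, c] := by funext i; fin_cases i <;> rfl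
    have e3 : T 2 (c+1) a b = ![a, b, c+1] := by funext i; fin_cases i <;> rfl
    show B (T 0 (a+1) b c) ≤ B (T 1 (b+1) c a) ⊔ B (T 2 (c+1) a b)
    rw [e1, e2, e3]
    exact (black_le hB h).1
  · have e1 : T 1 (a+1) b c = ![c, a+1, b] := by funext i; fin_cases i <;> rfl
    have e2 : T 2 (b+1) c a = ![c, a, b+1] := by funext i; fin_cases i <;> rfl
    have e3 : T 0 (c+1) a b = ![c+1, a, b] := by funext i; fin_cases i <;> rfl
    show B (T 1 (a+1) b c) ≤ B (T 2 (b+1) c a) ⊔ B (T 0 (c+1) a b)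
    rw [e1, e2, e3, sup_comm]
    exact (black_le hB (by omega : c + a + b + 1 = N)).2.1
  · have e1 : T 2 (a+1) b c = ![b, c, a+1] := by funext i; fin_cases i <;> rfl
    have e2 : T 0 (b+1) c a = ![b+1, c, a] := by funext i; fin_cases i <;> rfl
    have e3 : T 1 (c+1) a b = ![b, c+1, a] := by funext i; fin_cases i <;> rfl
    show B (T 2 (a+1) b c) ≤ B (T 0 (b+1) c a) ⊔ B (T 1 (c+1) a b)
    rw [e1, e2, e3]
    exact (black_le hB (by omega : b + c + a + 1 = N)).2.2

/-- span of the line with η-coordinate c -/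
def W (B : (Fin 3 → ℕ) → Submodule F V) (N : ℕ) (η : Fin 3) (c : ℕ) : Submodule F V :=
  ⨆ (v : Fin 3 → ℕ) (_ : v ∈ BA.Delta N ∧ v η = c), B v

lemma le_W {v : Fin 3 → ℕ} (hv : v ∈ BA.Delta N) {η : Fin 3} {c : ℕ}
    (hc : v η = c) : B v ≤ W B N η c :=
  le_iSup₂ (f := fun v (_ : v ∈ BA.Delta N ∧ v η = c) => B v) v ⟨hv, hc⟩

lemma step_down [FiniteDimensional F V] (hB : BA.IsBilliardArray N B)
    {v : Fin 3 → ℕ} (hv : v ∈ BA.Delta N) {η : Fin 3} {c : ℕ}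
    (hc : v η = c + 1) : B v ≤ W B N η c := by
  have hvT : v = T η (c+1) (v (η+1)) (v (η+2)) := by rw [← hc]; exact eq_T η v
  set b := v (η + 1)
  set d := v (η + 2)
  have hsum : c + b + d + 1 = N := by
    have := (T_mem_Delta (N := N) η (c+1) b d).mp (hvT ▸ hv)
    omega
  have h1 : B (T (η+1) (b+1) d c) ≤ W B N η c := by
    apply le_W
    · exact (T_mem_Delta _ _ _ _).mpr (by omega)
    · fin_cases η <;> rfl
  have h2 : B (T (η+2) (d+1) c b) ≤ W B N η c := by
    apply le_W
    · exact (T_mem_Delta _ _ _ _).mpr (by omega)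
    · fin_cases η <;> rfl
  calc B v = B (T η (c+1) b d) := by rw [← hvT]
    _ ≤ B (T (η+1) (b+1) d c) ⊔ B (T (η+2) (d+1) c b) := black_T hB η hsum
    _ ≤ W B N η c := sup_le h1 h2

lemma W_succ_le [FiniteDimensional F V] (hB : BA.IsBilliardArray N B)
    (η : Fin 3) (c : ℕ) : W B N η (c+1) ≤ W B N η c :=
  iSup₂_le fun _ hv => step_down hB hv.1 hv.2

lemma W_antitone [FiniteDimensional F V] (hB : BA.IsBilliardArray N B)
    (η : Fin 3) {c d : ℕ} (h : c ≤ d) : W B N η d ≤ W B N η c := by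
  induction d, h using Nat.le_induction with
  | base => exact le_rfl
  | succ n hn ih => exact (W_succ_le hB η n).trans ih

lemma W_empty (η : Fin 3) {c : ℕ} (h : N < c) : W B N η c = ⊥ := by
  rw [eq_bot_iff]
  exact iSup₂_le fun v hv => absurd ((hv.2 ▸ coord_le hv.1 η) : c ≤ N) (by omega)

end BAx
namespace BAx

variable {F V : Type*} [Field F] [AddCommGroup V] [Module F V]
variable {N : ℕ} {B : (Fin 3 → ℕ) → Submodule F V}

lemma step_up [FiniteDimensional F V] (hB : BA.IsBilliardArray N B)
    (η : Fin 3) {c s : ℕ} (h : c + s + 1 ≤ N) :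
    B (T η c (s+1) (N-c-(s+1))) ≤ W B N η (c+1) ⊔ B (T η c s (N-c-s)) := by
  set t : ℕ := N - c - (s + 1) with ht
  have hsum : s + t + c + 1 = N := by omega
  have key := black_T hB (η+1) hsum
  have e1 : T (η+1) (s+1) t c = T η c (s+1) t := T_rotate η (s+1) t c
  have e2 : T (η+1+1) (t+1) c s = T η c s (t+1) :=
    (T_rotate (η+1) (t+1) c s).trans (T_rotate η s (t+1) c)
  have e3 : (η+1+2) = η := by fin_cases η <;> rfl
  rw [e1, e2, e3] at key
  have e4 : t + 1 = N - c - s := by omega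
  rw [e4] at key
  refine key.trans (sup_le le_sup_right ?_)
  refine le_sup_left.trans' (le_W ?_ (T_app0 η (c+1) s t))
  exact (T_mem_Delta _ _ _ _).mpr (by omega)

lemma step_dn [FiniteDimensional F V] (hB : BA.IsBilliardArray N B)
    (η : Fin 3) {c s : ℕ} (h : c + s + 1 ≤ N) :
    B (T η c s (N-c-s)) ≤ W B N η (c+1) ⊔ B (T η c (s+1) (N-c-(s+1))) := by
  set t : ℕ := N - c - (s + 1) with ht
  have hsum : t + c + s + 1 = N := by omega
  have key := black_T hB (η+2) hsum
  have e1 : T (η+2) (t+1) c s = T η c s (t+1) := by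
    rw [show η+2 = η+1+1 from by fin_cases η <;> rfl]
    exact (T_rotate (η+1) (t+1) c s).trans (T_rotate η s (t+1) c)
  have e2 : (η+2+1) = η := by fin_cases η <;> rfl
  have e3 : T (η+2+2) (s+1) t c = T η c (s+1) t := by
    rw [show η+2+2 = η+1 from by fin_cases η <;> rfl]
    exact T_rotate η (s+1) t c
  rw [e1, e2, e3] at key
  have e4 : t + 1 = N - c - s := by omega
  rw [e4] at key
  refine key.trans (sup_le ?_ le_sup_right)
  refine le_sup_left.trans' (le_W ?_ (T_app0 η (c+1) s t))
  exact (T_mem_Delta _ _ _ _).mpr (by omega)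

lemma crawl_up [FiniteDimensional F V] (hB : BA.IsBilliardArray N B)
    (η : Fin 3) {c : ℕ} (d : ℕ) : ∀ s s' : ℕ, s' = s + d → c + s' ≤ N →
    B (T η c s' (N-c-s')) ≤ W B N η (c+1) ⊔ B (T η c s (N-c-s)) := by
  induction d with
  | zero => intro s s' he _; subst he; exact le_sup_right
  | succ d ih =>
    intro s s' he hle
    subst he
    have h1 : B (T η c (s+d+1) (N-c-(s+d+1))) ≤
        W B N η (c+1) ⊔ B (T η c (s+d) (N-c-(s+d))) :=
      step_up hB η (by omega)
    have h2 := ih s (s+d) rfl (by omega)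
    calc B (T η c (s+(d+1)) (N-c-(s+(d+1))))
        = B (T η c (s+d+1) (N-c-(s+d+1))) := by rw [show s+(d+1) = s+d+1 from rfl]
      _ ≤ W B N η (c+1) ⊔ B (T η c (s+d) (N-c-(s+d))) := h1
      _ ≤ W B N η (c+1) ⊔ (W B N η (c+1) ⊔ B (T η c s (N-c-s))) := sup_le_sup_left h2 _
      _ = W B N η (c+1) ⊔ B (T η c s (N-c-s)) := by rw [← sup_assoc, sup_idem]

lemma crawl_dn [FiniteDimensional F V] (hB : BA.IsBilliardArray N B)
    (η : Fin 3) {c : ℕ} (d : ℕ) : ∀ s s' : ℕ, s' = s + d → c + s' ≤ N →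
    B (T η c s (N-c-s)) ≤ W B N η (c+1) ⊔ B (T η c s' (N-c-s')) := by
  induction d with
  | zero => intro s s' he _; subst he; exact le_sup_right
  | succ d ih =>
    intro s s' he hle
    subst he
    have h2 := ih s (s+d) rfl (by omega)
    have h1 : B (T η c (s+d) (N-c-(s+d))) ≤
        W B N η (c+1) ⊔ B (T η c (s+d+1) (N-c-(s+d+1))) :=
      step_dn hB η (by omega)
    calc B (T η c s (N-c-s))
        ≤ W B N η (c+1) ⊔ B (T η c (s+d) (N-c-(s+d))) := h2
      _ ≤ W B N η (c+1) ⊔ (W B N η (c+1) ⊔ B (T η c (s+d+1) (N-c-(s+d+1)))) :=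
          sup_le_sup_left h1 _
      _ = W B N η (c+1) ⊔ B (T η c (s+(d+1)) (N-c-(s+(d+1)))) := by
          rw [← sup_assoc, sup_idem, show s+(d+1) = s+d+1 from rfl]

lemma T_form {v : Fin 3 → ℕ} (hv : v ∈ BA.Delta N) (η : Fin 3) {c : ℕ}
    (hc : v η = c) : v = T η c (v (η+1)) (N - c - v (η+1)) ∧ c + v (η+1) ≤ N := by
  have he : v = T η c (v (η+1)) (v (η+2)) := by rw [← hc]; exact eq_T η v
  have hsum : c + v (η+1) + v (η+2) = N := (T_mem_Delta η _ _ _).mp (he ▸ hv)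
  constructor
  · rw [show N - c - v (η+1) = v (η+2) from by omega]; exact he
  · omega

lemma W_eq [FiniteDimensional F V] (hB : BA.IsBilliardArray N B)
    (η : Fin 3) {c : ℕ} {lam : Fin 3 → ℕ} (hlam : lam ∈ BA.Delta N)
    (he : lam η = c) : W B N η c = W B N η (c+1) ⊔ B lam := by
  obtain ⟨hT1, hle1⟩ := T_form hlam η he
  apply le_antisymm
  · refine iSup₂_le fun μ hμ => ?_
    obtain ⟨hT2, hle2⟩ := T_form hμ.1 η hμ.2
    rw [hT1, hT2]
    rcases le_total (lam (η+1)) (μ (η+1)) with hcmp | hcmp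
    · exact crawl_up hB η (μ (η+1) - lam (η+1)) _ _ (by omega) (by omega)
    · exact crawl_dn hB η (lam (η+1) - μ (η+1)) _ _ (by omega) (by omega)
  · exact sup_le (W_succ_le hB η c) (le_W hlam he)

end BAx
namespace BAx

variable {F V : Type*} [Field F] [AddCommGroup V] [Module F V]
variable {N : ℕ} {B : (Fin 3 → ℕ) → Submodule F V}

lemma W_le_span [FiniteDimensional F V] {u : (Fin 3 → ℕ) → V}
    (hu : ∀ v ∈ BA.Delta N, u v ∈ B v ∧ u v ≠ 0 ∧ B v = Submodule.span F {u v})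
    (η : Fin 3) (d : ℕ) :
    W B N η d ≤ Submodule.span F
      (Set.range fun s : Fin (N - d + 1) => u (T η d s (N - d - s))) := by
  refine iSup₂_le fun v hv => ?_
  obtain ⟨hT, hle⟩ := T_form hv.1 η hv.2
  rw [(hu v hv.1).2.2]
  refine Submodule.span_le.mpr (Set.singleton_subset_iff.mpr (Submodule.subset_span ?_))
  exact ⟨⟨v (η+1), by omega⟩,
    show u (T η d (v (η+1)) (N - d - v (η+1))) = u v from by rw [← hT]⟩

lemma key_disjoint [FiniteDimensional F V] (hB : BA.IsBilliardArray N B)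
    {u : (Fin 3 → ℕ) → V}
    (hu : ∀ v ∈ BA.Delta N, u v ∈ B v ∧ u v ≠ 0 ∧ B v = Submodule.span F {u v})
    (η : Fin 3) {c : ℕ} {lam : Fin 3 → ℕ} (hlam : lam ∈ BA.Delta N)
    (he : lam η = c) : Disjoint (B lam) (W B N η (c+1)) := by
  have hcN : c ≤ N := he ▸ coord_le hlam η
  rcases eq_or_lt_of_le hcN with hcN' | hcN'
  · rw [W_empty η (by omega)]
    exact disjoint_bot_right
  by_contra hnd
  have hle : B lam ≤ W B N η (c+1) := le_of_not_disjoint (hB.1 lam hlam) hnd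
  have hWeq : W B N η c = W B N η (c+1) := by
    rw [W_eq hB η hlam he]
    exact sup_eq_left.mpr hle
  -- upper bound
  have hup : Module.finrank F (W B N η (c+1)) ≤ N - c := by
    have h1 := W_le_span (B := B) hu η (c+1)
    have h2 := Submodule.finrank_mono h1
    refine h2.trans ((finrank_range_le_card _).trans ?_)
    rw [Fintype.card_fin]
    omega
  -- lower bound
  have hlo : N - c + 1 ≤ Module.finrank F (W B N η c) := by
    set L := {x ∈ BA.Delta N | x η = c} with hL
    have hind := hB.2.1 L ⟨η, c, hcN, rfl⟩
    have li : LinearIndependent F fun x : L => u x.1 :=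
      iSupIndep.linearIndependent _ hind (fun i => (hu i.1 i.2.1).1)
        (fun i => (hu i.1 i.2.1).2.1)
    have gmem : ∀ s : Fin (N - c + 1), T η c (s : ℕ) (N - c - s) ∈ L := by
      intro s
      refine ⟨(T_mem_Delta _ _ _ _).mpr (by omega : c + s + (N-c-(s:ℕ)) = N), T_app0 _ _ _ _⟩
    set gmap : Fin (N - c + 1) → L := fun s => ⟨T η c s (N - c - s), gmem s⟩ with hg
    have hinj : Function.Injective gmap := by
      intro s s' hss
      have := congrArg (fun x : L => x.1 (η + 1)) hss
      simp only [hg, T_app1] at this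
      exact Fin.ext this
    have li2 : LinearIndependent F fun s : Fin (N - c + 1) => u (gmap s).1 :=
      li.comp gmap hinj
    set g' : Fin (N - c + 1) → ↥(W B N η c) :=
      fun s => ⟨u (gmap s).1, le_W (gmem s).1 (gmem s).2 ((hu _ (gmem s).1).1)⟩ with hg'
    have li3 : LinearIndependent F g' := by
      apply LinearIndependent.of_comp (W B N η c).subtype
      exact li2
    have := li3.fintype_card_le_finrank
    rwa [Fintype.card_fin] at this
  rw [hWeq] at hlo
  omega

end BAx

/-- For a Billiard Array `B` on `V` and an `η`-geodesic subset `S ⊆ Δ_N`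
(distinct elements of `S` have distinct `η`-coordinates), the sum
`∑_{λ ∈ S} B_λ` is direct. -/
theorem stmt15 {F V : Type*} [Field F] [AddCommGroup V] [Module F V] (N : ℕ)
    (hV : Module.finrank F V = N + 1) (B : (Fin 3 → ℕ) → Submodule F V)
    (hB : BA.IsBilliardArray N B)
    (η : Fin 3) (S : Set (Fin 3 → ℕ)) (hS : S ⊆ BA.Delta N)
    (hgeo : ∀ x ∈ S, ∀ y ∈ S, x η = y η → x = y) :
    iSupIndep fun x : S => B x.1 := by
  classical
  have hfd : FiniteDimensional F V :=
    FiniteDimensional.of_finrank_pos (by rw [hV]; omega)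
  have hex : ∀ v : Fin 3 → ℕ, ∃ x : V,
      v ∈ BA.Delta N → (x ∈ B v ∧ x ≠ 0 ∧ B v = Submodule.span F {x}) := by
    intro v
    by_cases hv : v ∈ BA.Delta N
    · obtain ⟨x, hx, hx0⟩ := Submodule.exists_mem_ne_zero_of_ne_bot
        (BAx.ne_bot_of_finrank_one (hB.1 v hv))
      refine ⟨x, fun _ => ⟨hx, hx0, ?_⟩⟩
      exact (Submodule.eq_of_le_of_finrank_le
        ((Submodule.span_singleton_le_iff_mem _ _).mpr hx)
        (by rw [hB.1 v hv, finrank_span_singleton hx0])).symm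
    · exact ⟨0, fun h => absurd h hv⟩
  choose u hu using hex
  have claim : ∀ sfin : Finset ↥S, ∀ g : ↥S → F,
      ∑ j ∈ sfin, g j • u j.1 = 0 → ∀ i ∈ sfin, g i = 0 := by
    intro sfin
    induction sfin using Finset.strongInductionOn with
    | _ sfin ih =>
      intro g hsum i hi
      have hne : (sfin.image fun x : ↥S => x.1 η).Nonempty :=
        ⟨i.1 η, Finset.mem_image.mpr ⟨i, hi, rfl⟩⟩
      set m := (sfin.image fun x : ↥S => x.1 η).min' hne with hm
      obtain ⟨μ, hμ, hμc⟩ := Finset.mem_image.mp ((sfin.image fun x : ↥S => x.1 η).min'_mem hne)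
      have hrest : ∑ j ∈ sfin.erase μ, g j • u j.1 ∈ BAx.W B N η (m+1) := by
        refine Submodule.sum_mem _ fun j hj => Submodule.smul_mem _ _ ?_
        have hjne : j ≠ μ := (Finset.mem_erase.mp hj).1
        have hjs : j ∈ sfin := (Finset.mem_erase.mp hj).2
        have hge : m ≤ j.1 η :=
          Finset.min'_le _ _ (Finset.mem_image.mpr ⟨j, hjs, rfl⟩)
        have hneq : j.1 η ≠ m := by
          intro hcon
          exact hjne (Subtype.ext (hgeo j.1 j.2 μ.1 μ.2 (hcon.trans hμc.symm)))
        have h1 : u j.1 ∈ BAx.W B N η (j.1 η) :=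
          BAx.le_W (hS j.2) rfl ((hu j.1 (hS j.2)).1)
        exact BAx.W_antitone hB η (by omega) h1
      have hadd : g μ • u μ.1 + ∑ j ∈ sfin.erase μ, g j • u j.1 = 0 := by
        rw [← Finset.add_sum_erase _ _ hμ] at hsum; exact hsum
      have hmem1 : g μ • u μ.1 ∈ B μ.1 :=
        Submodule.smul_mem _ _ ((hu μ.1 (hS μ.2)).1)
      have hmem2 : g μ • u μ.1 ∈ BAx.W B N η (m+1) := by
        have : g μ • u μ.1 = - ∑ j ∈ sfin.erase μ, g j • u j.1 :=
          eq_neg_of_add_eq_zero_left hadd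
        rw [this]
        exact Submodule.neg_mem _ hrest
      have hdisj := BAx.key_disjoint hB hu η (hS μ.2) hμc
      have hz : g μ • u μ.1 = 0 :=
        Submodule.disjoint_def.mp hdisj _ hmem1 hmem2
      have hgμ : g μ = 0 := by
        rcases smul_eq_zero.mp hz with h | h
        · exact h
        · exact absurd h ((hu μ.1 (hS μ.2)).2.1)
      have hrest0 : ∑ j ∈ sfin.erase μ, g j • u j.1 = 0 := by
        rw [hgμ, zero_smul, zero_add] at hadd
        exact hadd
      by_cases hiμ : i = μ
      · rw [hiμ]; exact hgμ
      · exact ih (sfin.erase μ) (Finset.erase_ssubset hμ) g hrest0 i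
          (Finset.mem_erase.mpr ⟨hiμ, hi⟩)
  have li : LinearIndependent F fun x : S => u x.1 := linearIndependent_iff'.mpr claim
  have hfun : (fun x : S => B x.1) = fun x : S => Submodule.span F {u x.1} :=
    funext fun x => (hu x.1 (hS x.2)).2.2
  rw [hfun]
  exact li.iSupIndep_span_singleton
end

section
/- Let F be a field, N a natural number, V an (N+1)-dimensional vector space over F, and B a Billiard Array on V. Then B is injective: if λ, μ are locations in Δ_N with B_λ = B_μ, then λ = μ. -/
namespace BAaux

open Module

variable {F V : Type*} [Field F] [AddCommGroup V] [Module F V]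

lemma eta3 (v : Fin 3 → ℕ) : v = ![v 0, v 1, v 2] := by
  funext i; fin_cases i <;> rfl

lemma mem_Delta {N : ℕ} {v : Fin 3 → ℕ} : v ∈ BA.Delta N ↔ v 0 + v 1 + v 2 = N := Iff.rfl

lemma coord_le {N : ℕ} {v : Fin 3 → ℕ} (hv : v ∈ BA.Delta N) (η : Fin 3) : v η ≤ N := by
  rw [mem_Delta] at hv
  fin_cases η
  · show v 0 ≤ N; omega
  · show v 1 ≤ N; omega
  · show v 2 ≤ N; omega

/-- a nonzero subspace contained in stuff: 1-dim not disjoint → contained -/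
lemma le_of_not_disjoint_s16 [FiniteDimensional F V] {P Q : Submodule F V}
    (h1 : finrank F P = 1) (h : ¬ Disjoint P Q) : P ≤ Q := by
  rw [disjoint_iff] at h
  have hle : P ⊓ Q ≤ P := inf_le_left
  have : P ⊓ Q = P := by
    apply Submodule.eq_of_le_of_finrank_le hle
    have : Module.finrank F (P ⊓ Q : Submodule F V) ≠ 0 := by
      simpa [Submodule.finrank_eq_zero] using h
    omega
  rw [← this]; exact inf_le_right

lemma ne_bot_of_finrank_one {P : Submodule F V} (h1 : finrank F P = 1) : P ≠ ⊥ := by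
  intro h; rw [h] at h1; simp at h1

/-- pairwise disjointness from line independence -/
lemma line_disjoint_s16 {N : ℕ} {B : (Fin 3 → ℕ) → Submodule F V}
    (hB : BA.IsBilliardArray N B) {v w : Fin 3 → ℕ} (hv : v ∈ BA.Delta N)
    (hw : w ∈ BA.Delta N) (η : Fin 3) (hvw : v η = w η) (hne : v ≠ w) :
    Disjoint (B v) (B w) := by
  set L : Set (Fin 3 → ℕ) := {u ∈ BA.Delta N | u η = v η} with hL
  have hline : BA.IsLine N L := ⟨η, v η, coord_le hv η, rfl⟩
  have hind := hB.2.1 L hline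
  have hvL : v ∈ L := ⟨hv, rfl⟩
  have hwL : w ∈ L := ⟨hw, hvw.symm⟩
  have := hind ⟨v, hvL⟩
  refine this.mono_right ?_
  refine le_iSup_of_le ⟨w, hwL⟩ (le_iSup_of_le ?_ le_rfl)
  exact fun hc => hne (congrArg Subtype.val hc).symm


lemma abstract3 [FiniteDimensional F V] {A C D : Submodule F V}
    (hA : finrank F A = 1) (hC : finrank F C = 1) (hD : finrank F D = 1)
    (hCD : Disjoint C D)
    (hcase : A ≤ C ⊔ D ∨ C ≤ A ⊔ D ∨ D ≤ A ⊔ C) : A ≤ C ⊔ D := by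
  have h2 : finrank F ↥(C ⊔ D) = 2 := by
    have h := Submodule.finrank_sup_add_finrank_inf_eq C D
    rw [hCD.eq_bot] at h
    simp only [finrank_bot] at h
    omega
  rcases hcase with h | h | h
  · exact h
  · have hle : C ⊔ D ≤ A ⊔ D := sup_le h le_sup_right
    have h3 : finrank F ↥(A ⊔ D) ≤ 2 := by
      have h4 := Submodule.finrank_sup_add_finrank_inf_eq A D
      omega
    have heq := Submodule.eq_of_le_of_finrank_le hle (by omega)
    exact heq ▸ le_sup_left
  · have hle : C ⊔ D ≤ A ⊔ C := sup_le le_sup_right h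
    have h3 : finrank F ↥(A ⊔ C) ≤ 2 := by
      have h4 := Submodule.finrank_sup_add_finrank_inf_eq A C
      omega
    have heq := Submodule.eq_of_le_of_finrank_le hle (by omega)
    exact heq ▸ le_sup_left

lemma clique_cases {N : ℕ} {B : (Fin 3 → ℕ) → Submodule F V} [FiniteDimensional F V]
    (hB : BA.IsBilliardArray N B) {r s t : ℕ} (h : r + s + t + 1 = N) :
    B ![r+1,s,t] ≤ B ![r,s+1,t] ⊔ B ![r,s,t+1] ∨
    B ![r,s+1,t] ≤ B ![r+1,s,t] ⊔ B ![r,s,t+1] ∨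
    B ![r,s,t+1] ≤ B ![r+1,s,t] ⊔ B ![r,s+1,t] := by
  set p : Fin 3 → ℕ := ![r+1,s,t] with hp
  set q : Fin 3 → ℕ := ![r,s+1,t] with hq
  set w : Fin 3 → ℕ := ![r,s,t+1] with hw
  have hpD : p ∈ BA.Delta N := by simp [BA.Delta, hp]; omega
  have hqD : q ∈ BA.Delta N := by simp [BA.Delta, hq]; omega
  have hwD : w ∈ BA.Delta N := by simp [BA.Delta, hw]; omega
  have hp1 : finrank F (B p) = 1 := hB.1 p hpD
  have hq1 : finrank F (B q) = 1 := hB.1 q hqD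
  have hw1 : finrank F (B w) = 1 := hB.1 w hwD
  have hpq : p ≠ q := fun hc => by have := congrFun hc 0; simp [hp, hq] at this
  have hpw : p ≠ w := fun hc => by have := congrFun hc 0; simp [hp, hw] at this
  have hqw : q ≠ w := fun hc => by have := congrFun hc 1; simp [hq, hw] at this
  have hcl := hB.2.2 r s t h
  rw [iSupIndep_def] at hcl
  push_neg at hcl
  obtain ⟨x, hx⟩ := hcl
  have hmem : x.1 = p ∨ x.1 = q ∨ x.1 = w := by
    have hm := x.2
    simp only [BA.blackSet, Set.mem_insert_iff, Set.mem_singleton_iff] at hm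
    exact hm
  have hsup : ∀ y z : Fin 3 → ℕ, (p = x.1 ∨ p = y ∨ p = z) → (q = x.1 ∨ q = y ∨ q = z) →
      (w = x.1 ∨ w = y ∨ w = z) →
      (⨆ (j : BA.blackSet r s t) (_ : j ≠ x), B j.1) ≤ B y ⊔ B z := by
    intro y z h1 h2 h3
    refine iSup_le fun j => iSup_le fun hj => ?_
    have hjm : j.1 = p ∨ j.1 = q ∨ j.1 = w := by
      have hm := j.2
      simp only [BA.blackSet, Set.mem_insert_iff, Set.mem_singleton_iff] at hm
      exact hm
    rcases hjm with hj1 | hj1 | hj1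
    · rcases h1 with h' | h' | h'
      · exact absurd (Subtype.ext (hj1.trans h')) hj
      · rw [hj1, ← h']; exact le_sup_left
      · rw [hj1, ← h']; exact le_sup_right
    · rcases h2 with h' | h' | h'
      · exact absurd (Subtype.ext (hj1.trans h')) hj
      · rw [hj1, ← h']; exact le_sup_left
      · rw [hj1, ← h']; exact le_sup_right
    · rcases h3 with h' | h' | h'
      · exact absurd (Subtype.ext (hj1.trans h')) hj
      · rw [hj1, ← h']; exact le_sup_left
      · rw [hj1, ← h']; exact le_sup_right
  rcases hmem with hxm | hxm | hxm
  · left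
    have hb := hsup q w (Or.inl hxm.symm) (Or.inr (Or.inl rfl)) (Or.inr (Or.inr rfl))
    rw [hxm] at hx
    exact le_of_not_disjoint_s16 hp1 fun hd => hx (hd.mono_right hb)
  · right; left
    have hb := hsup p w (Or.inr (Or.inl rfl)) (Or.inl hxm.symm) (Or.inr (Or.inr rfl))
    rw [hxm] at hx
    exact le_of_not_disjoint_s16 hq1 fun hd => hx (hd.mono_right hb)
  · right; right
    have hb := hsup p q (Or.inr (Or.inl rfl)) (Or.inr (Or.inr rfl)) (Or.inl hxm.symm)
    rw [hxm] at hx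
    exact le_of_not_disjoint_s16 hw1 fun hd => hx (hd.mono_right hb)


lemma clique_le {N : ℕ} {B : (Fin 3 → ℕ) → Submodule F V} [FiniteDimensional F V]
    (hB : BA.IsBilliardArray N B) {r s t : ℕ} (h : r + s + t + 1 = N) :
    (B ![r+1,s,t] ≤ B ![r,s+1,t] ⊔ B ![r,s,t+1]) ∧
    (B ![r,s+1,t] ≤ B ![r+1,s,t] ⊔ B ![r,s,t+1]) ∧
    (B ![r,s,t+1] ≤ B ![r+1,s,t] ⊔ B ![r,s+1,t]) := by
  have hpD : (![r+1,s,t] : Fin 3 → ℕ) ∈ BA.Delta N := by simp [BA.Delta]; omega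
  have hqD : (![r,s+1,t] : Fin 3 → ℕ) ∈ BA.Delta N := by simp [BA.Delta]; omega
  have hwD : (![r,s,t+1] : Fin 3 → ℕ) ∈ BA.Delta N := by simp [BA.Delta]; omega
  have hp1 := hB.1 _ hpD
  have hq1 := hB.1 _ hqD
  have hw1 := hB.1 _ hwD
  have hpq : (![r+1,s,t] : Fin 3 → ℕ) ≠ ![r,s+1,t] := fun hc => by
    have := congrFun hc 0; simp at this
  have hpw : (![r+1,s,t] : Fin 3 → ℕ) ≠ ![r,s,t+1] := fun hc => by
    have := congrFun hc 0; simp at this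
  have hqw : (![r,s+1,t] : Fin 3 → ℕ) ≠ ![r,s,t+1] := fun hc => by
    have := congrFun hc 1; simp at this
  have dqw : Disjoint (B ![r,s+1,t]) (B ![r,s,t+1]) :=
    line_disjoint_s16 hB hqD hwD 0 (by simp) hqw
  have dpw : Disjoint (B ![r+1,s,t]) (B ![r,s,t+1]) :=
    line_disjoint_s16 hB hpD hwD 1 (by simp) hpw
  have dpq : Disjoint (B ![r+1,s,t]) (B ![r,s+1,t]) :=
    line_disjoint_s16 hB hpD hqD 2 (by simp) hpq
  have hcc := clique_cases hB h
  refine ⟨?_, ?_, ?_⟩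
  · refine abstract3 hp1 hq1 hw1 dqw ?_
    rcases hcc with hc | hc | hc
    · exact Or.inl hc
    · exact Or.inr (Or.inl hc)
    · exact Or.inr (Or.inr hc)
  · refine abstract3 hq1 hp1 hw1 dpw ?_
    rcases hcc with hc | hc | hc
    · exact Or.inr (Or.inl hc)
    · exact Or.inl hc
    · exact Or.inr (Or.inr (by rwa [sup_comm (B ![r+1,s,t])] at hc))
  · refine abstract3 hw1 hp1 hq1 dpq ?_
    rcases hcc with hc | hc | hc
    · exact Or.inr (Or.inl (by rwa [sup_comm (B ![r,s+1,t])] at hc))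
    · exact Or.inr (Or.inr (by rwa [sup_comm (B ![r+1,s,t])] at hc))
    · exact Or.inl hc


lemma down {N : ℕ} {B : (Fin 3 → ℕ) → Submodule F V} [FiniteDimensional F V]
    (hB : BA.IsBilliardArray N B) (η θ ψ : Fin 3) (h1 : η ≠ θ) (h2 : η ≠ ψ)
    (h3 : θ ≠ ψ) {v : Fin 3 → ℕ} (hv : v ∈ BA.Delta N) (hpos : 1 ≤ v η) :
    ∃ w u, w ∈ BA.Delta N ∧ u ∈ BA.Delta N ∧
      w η = v η - 1 ∧ w θ = v θ + 1 ∧ w ψ = v ψ ∧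
      u η = v η - 1 ∧ u θ = v θ ∧ u ψ = v ψ + 1 ∧
      B v ≤ B w ⊔ B u := by
  have hvs : v 0 + v 1 + v 2 = N := hv
  set Goal : Fin 3 → Fin 3 → Fin 3 → Prop := fun η' θ' ψ' =>
    1 ≤ v η' → ∃ w u, w ∈ BA.Delta N ∧ u ∈ BA.Delta N ∧
      w η' = v η' - 1 ∧ w θ' = v θ' + 1 ∧ w ψ' = v ψ' ∧
      u η' = v η' - 1 ∧ u θ' = v θ' ∧ u ψ' = v ψ' + 1 ∧
      B v ≤ B w ⊔ B u with hGoal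
  suffices hG : Goal η θ ψ from hG hpos
  clear hpos
  fin_cases η <;> fin_cases θ <;> fin_cases ψ <;>
    first | exact absurd rfl h1 | exact absurd rfl h2 | exact absurd rfl h3 | skip
  · -- η=0 θ=1 ψ=2
    show Goal 0 1 2
    simp only [hGoal]; intro hpos
    have hveq : v = ![(v 0 - 1)+1, v 1, v 2] := by
      funext i; fin_cases i
      · show v 0 = v 0 - 1 + 1; omega
      · rfl
      · rfl
    have hsum : (v 0 - 1) + v 1 + v 2 + 1 = N := by omega
    refine ⟨![v 0 - 1, v 1 + 1, v 2], ![v 0 - 1, v 1, v 2 + 1],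
      by simp [BA.Delta]; omega, by simp [BA.Delta]; omega,
      by simp, by simp, by simp, by simp, by simp, by simp, ?_⟩
    rw [hveq]
    exact (clique_le hB hsum).1
  · -- η=0 θ=2 ψ=1
    show Goal 0 2 1
    simp only [hGoal]; intro hpos
    have hveq : v = ![(v 0 - 1)+1, v 1, v 2] := by
      funext i; fin_cases i
      · show v 0 = v 0 - 1 + 1; omega
      · rfl
      · rfl
    have hsum : (v 0 - 1) + v 1 + v 2 + 1 = N := by omega
    refine ⟨![v 0 - 1, v 1, v 2 + 1], ![v 0 - 1, v 1 + 1, v 2],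
      by simp [BA.Delta]; omega, by simp [BA.Delta]; omega,
      by simp, by simp, by simp, by simp, by simp, by simp, ?_⟩
    rw [hveq, sup_comm]
    exact (clique_le hB hsum).1
  · -- η=1 θ=0 ψ=2
    show Goal 1 0 2
    simp only [hGoal]; intro hpos
    have hveq : v = ![v 0, (v 1 - 1)+1, v 2] := by
      funext i; fin_cases i
      · rfl
      · show v 1 = v 1 - 1 + 1; omega
      · rfl
    have hsum : v 0 + (v 1 - 1) + v 2 + 1 = N := by omega
    refine ⟨![v 0 + 1, v 1 - 1, v 2], ![v 0, v 1 - 1, v 2 + 1],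
      by simp [BA.Delta]; omega, by simp [BA.Delta]; omega,
      by simp, by simp, by simp, by simp, by simp, by simp, ?_⟩
    rw [hveq]
    exact (clique_le hB hsum).2.1
  · -- η=1 θ=2 ψ=0
    show Goal 1 2 0
    simp only [hGoal]; intro hpos
    have hveq : v = ![v 0, (v 1 - 1)+1, v 2] := by
      funext i; fin_cases i
      · rfl
      · show v 1 = v 1 - 1 + 1; omega
      · rfl
    have hsum : v 0 + (v 1 - 1) + v 2 + 1 = N := by omega
    refine ⟨![v 0, v 1 - 1, v 2 + 1], ![v 0 + 1, v 1 - 1, v 2],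
      by simp [BA.Delta]; omega, by simp [BA.Delta]; omega,
      by simp, by simp, by simp, by simp, by simp, by simp, ?_⟩
    rw [hveq, sup_comm]
    exact (clique_le hB hsum).2.1
  · -- η=2 θ=0 ψ=1
    show Goal 2 0 1
    simp only [hGoal]; intro hpos
    have hveq : v = ![v 0, v 1, (v 2 - 1)+1] := by
      funext i; fin_cases i
      · rfl
      · rfl
      · show v 2 = v 2 - 1 + 1; omega
    have hsum : v 0 + v 1 + (v 2 - 1) + 1 = N := by omega
    refine ⟨![v 0 + 1, v 1, v 2 - 1], ![v 0, v 1 + 1, v 2 - 1],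
      by simp [BA.Delta]; omega, by simp [BA.Delta]; omega,
      by simp, by simp, by simp, by simp, by simp, by simp, ?_⟩
    rw [hveq]
    exact (clique_le hB hsum).2.2
  · -- η=2 θ=1 ψ=0
    show Goal 2 1 0
    simp only [hGoal]; intro hpos
    have hveq : v = ![v 0, v 1, (v 2 - 1)+1] := by
      funext i; fin_cases i
      · rfl
      · rfl
      · show v 2 = v 2 - 1 + 1; omega
    have hsum : v 0 + v 1 + (v 2 - 1) + 1 = N := by omega
    refine ⟨![v 0, v 1 + 1, v 2 - 1], ![v 0 + 1, v 1, v 2 - 1],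
      by simp [BA.Delta]; omega, by simp [BA.Delta]; omega,
      by simp, by simp, by simp, by simp, by simp, by simp, ?_⟩
    rw [hveq, sup_comm]
    exact (clique_le hB hsum).2.2


def S (N : ℕ) (B : (Fin 3 → ℕ) → Submodule F V) (η : Fin 3) (c : ℕ) : Submodule F V :=
  ⨆ (v : Fin 3 → ℕ) (_ : v ∈ BA.Delta N ∧ v η = c), B v

lemma le_S {N : ℕ} {B : (Fin 3 → ℕ) → Submodule F V} {η : Fin 3} {c : ℕ}
    {v : Fin 3 → ℕ} (hv : v ∈ BA.Delta N) (hc : v η = c) : B v ≤ S N B η c :=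
  le_iSup₂ (f := fun v (_ : v ∈ BA.Delta N ∧ v η = c) => B v) v ⟨hv, hc⟩

lemma S_le {N : ℕ} {B : (Fin 3 → ℕ) → Submodule F V} {η : Fin 3} {c : ℕ}
    {K : Submodule F V} (h : ∀ v, v ∈ BA.Delta N → v η = c → B v ≤ K) :
    S N B η c ≤ K :=
  iSup₂_le fun v hv => h v hv.1 hv.2

lemma S_succ_le {N : ℕ} {B : (Fin 3 → ℕ) → Submodule F V} [FiniteDimensional F V]
    (hB : BA.IsBilliardArray N B) (η : Fin 3) (c : ℕ) :
    S N B η (c+1) ≤ S N B η c := by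
  refine S_le fun v hv hc => ?_
  have hθψ : ∃ θ ψ : Fin 3, η ≠ θ ∧ η ≠ ψ ∧ θ ≠ ψ := by
    fin_cases η
    · exact ⟨1, 2, by decide, by decide, by decide⟩
    · exact ⟨0, 2, by decide, by decide, by decide⟩
    · exact ⟨0, 1, by decide, by decide, by decide⟩
  obtain ⟨θ, ψ, ha, hb, hab⟩ := hθψ
  have hpos : 1 ≤ v η := by omega
  obtain ⟨w, u, hwD, huD, hwη, -, -, huη, -, -, hle⟩ := down hB η θ ψ ha hb hab hv hpos
  exact hle.trans (sup_le (le_S hwD (by omega)) (le_S huD (by omega)))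

lemma S_mono {N : ℕ} {B : (Fin 3 → ℕ) → Submodule F V} [FiniteDimensional F V]
    (hB : BA.IsBilliardArray N B) (η : Fin 3) {c d : ℕ} (hcd : c ≤ d) :
    S N B η d ≤ S N B η c := by
  induction d, hcd using Nat.le_induction with
  | base => exact le_rfl
  | succ d hd ih => exact (S_succ_le hB η d).trans ih

lemma S_empty {N : ℕ} {B : (Fin 3 → ℕ) → Submodule F V} {η : Fin 3} {c : ℕ}
    (hc : N < c) : S N B η c = ⊥ :=
  le_bot_iff.1 (S_le fun v hv hvc => absurd (coord_le hv η) (by omega))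

lemma finrank_biSup [FiniteDimensional F V] {ι : Type*} (s : Finset ι)
    (f : ι → Submodule F V) (h : iSupIndep f) :
    finrank F ↥(⨆ i ∈ s, f i) = ∑ i ∈ s, finrank F (f i) := by
  classical
  induction s using Finset.induction_on with
  | empty => simp
  | insert a s ha ih =>
    have hsup : (⨆ i ∈ insert a s, f i) = f a ⊔ ⨆ i ∈ s, f i := by
      simp [Finset.mem_insert, iSup_or, iSup_sup_eq, iSup_iSup_eq_left]
    have hd : Disjoint (f a) (⨆ i ∈ s, f i) := by
      refine (h a).mono_right (iSup₂_le fun i hi => ?_)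
      exact le_iSup₂ (f := fun i (_ : i ≠ a) => f i) i (fun hia => ha (hia ▸ hi))
    have hfr := Submodule.finrank_sup_add_finrank_inf_eq (f a) (⨆ i ∈ s, f i)
    rw [hd.eq_bot, finrank_bot] at hfr
    rw [hsup, Finset.sum_insert ha, ← ih]
    omega

lemma finrank_iSup_fin [FiniteDimensional F V] {n : ℕ} (f : Fin n → Submodule F V)
    (h : iSupIndep f) (h1 : ∀ j, finrank F (f j) = 1) :
    finrank F ↥(⨆ j, f j) = n := by
  have e : (⨆ j, f j) = ⨆ j ∈ Finset.univ, f j := by simp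
  rw [e, finrank_biSup _ f h]
  simp [h1]

lemma finrank_S_aux {N : ℕ} {B : (Fin 3 → ℕ) → Submodule F V} [FiniteDimensional F V]
    (hB : BA.IsBilliardArray N B) {c : ℕ} (hc : c ≤ N) (η : Fin 3)
    (g : Fin (N+1-c) → (Fin 3 → ℕ))
    (hgD : ∀ j, g j ∈ BA.Delta N) (hgc : ∀ j, g j η = c)
    (hginj : Function.Injective g)
    (hsurj : ∀ v, v ∈ BA.Delta N → v η = c → ∃ j, v = g j) :
    finrank F ↥(S N B η c) = N + 1 - c := by
  have Seq : S N B η c = ⨆ j, B (g j) := by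
    refine le_antisymm (S_le fun v hv hvc => ?_) (iSup_le fun j => le_S (hgD j) (hgc j))
    obtain ⟨j, rfl⟩ := hsurj v hv hvc
    exact le_iSup (fun j => B (g j)) j
  have hline : BA.IsLine N {v ∈ BA.Delta N | v η = c} := ⟨η, c, hc, rfl⟩
  have hind := hB.2.1 _ hline
  have einj : Function.Injective
      (fun j => (⟨g j, ⟨hgD j, hgc j⟩⟩ : {v ∈ BA.Delta N | v η = c})) :=
    fun j j' hjj => hginj (congrArg Subtype.val hjj)
  have hindg : iSupIndep fun j => B (g j) := hind.comp einj
  rw [Seq, finrank_iSup_fin _ hindg (fun j => hB.1 _ (hgD j))]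


lemma finrank_S {N : ℕ} {B : (Fin 3 → ℕ) → Submodule F V} [FiniteDimensional F V]
    (hB : BA.IsBilliardArray N B) {c : ℕ} (hc : c ≤ N) (η : Fin 3) :
    finrank F ↥(S N B η c) = N + 1 - c := by
  fin_cases η
  · refine finrank_S_aux hB hc _ (fun j => ![c, j.1, N - c - j.1]) ?_ (fun j => rfl) ?_ ?_
    · intro j; have := j.isLt
      simp only [BA.Delta, Set.mem_setOf_eq, Matrix.cons_val_zero, Matrix.cons_val_one,
        Matrix.head_cons, Matrix.cons_val_two, Matrix.tail_cons]
      omega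
    · intro j j' hjj
      have := congrFun hjj 1
      simp only [Matrix.cons_val_one, Matrix.head_cons] at this
      exact Fin.ext this
    · intro v hv hvc
      have hvc' : v 0 = c := hvc
      have hvs : v 0 + v 1 + v 2 = N := hv
      refine ⟨⟨v 1, by omega⟩, ?_⟩
      funext i; fin_cases i
      · exact hvc'
      · rfl
      · show v 2 = N - c - v 1; omega
  · refine finrank_S_aux hB hc _ (fun j => ![j.1, c, N - c - j.1]) ?_ (fun j => rfl) ?_ ?_
    · intro j; have := j.isLt
      simp only [BA.Delta, Set.mem_setOf_eq, Matrix.cons_val_zero, Matrix.cons_val_one,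
        Matrix.head_cons, Matrix.cons_val_two, Matrix.tail_cons]
      omega
    · intro j j' hjj
      have := congrFun hjj 0
      simp only [Matrix.cons_val_zero] at this
      exact Fin.ext this
    · intro v hv hvc
      have hvc' : v 1 = c := hvc
      have hvs : v 0 + v 1 + v 2 = N := hv
      refine ⟨⟨v 0, by omega⟩, ?_⟩
      funext i; fin_cases i
      · rfl
      · exact hvc'
      · show v 2 = N - c - v 0; omega
  · refine finrank_S_aux hB hc _ (fun j => ![j.1, N - c - j.1, c]) ?_ (fun j => rfl) ?_ ?_
    · intro j; have := j.isLt
      simp only [BA.Delta, Set.mem_setOf_eq, Matrix.cons_val_zero, Matrix.cons_val_one,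
        Matrix.head_cons, Matrix.cons_val_two, Matrix.tail_cons]
      omega
    · intro j j' hjj
      have := congrFun hjj 0
      simp only [Matrix.cons_val_zero] at this
      exact Fin.ext this
    · intro v hv hvc
      have hvc' : v 2 = c := hvc
      have hvs : v 0 + v 1 + v 2 = N := hv
      refine ⟨⟨v 0, by omega⟩, ?_⟩
      funext i; fin_cases i
      · rfl
      · show v 1 = N - c - v 0; omega
      · exact hvc'


lemma contain2 {N : ℕ} {B : (Fin 3 → ℕ) → Submodule F V} [FiniteDimensional F V]
    (hB : BA.IsBilliardArray N B) {a b : ℕ} (hab : a + b = N + 1) :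
    ∀ μ ∈ BA.Delta N, B μ ≤ S N B 0 a ⊔ S N B 1 b := by
  suffices H : ∀ k (μ : Fin 3 → ℕ), μ ∈ BA.Delta N →
      (a - μ 0) + (μ 0 - a) + (b - μ 1) + (μ 1 - b) ≤ k →
      B μ ≤ S N B 0 a ⊔ S N B 1 b from fun μ hμ => H _ μ hμ le_rfl
  intro k
  induction k with
  | zero =>
    intro μ hμ hk
    exact (le_S hμ (by omega : μ 0 = a)).trans le_sup_left
  | succ k ih =>
    intro μ hμ hk
    have hμs : μ 0 + μ 1 + μ 2 = N := hμ
    by_cases h0 : μ 0 = a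
    · exact (le_S hμ h0).trans le_sup_left
    by_cases h1 : μ 1 = b
    · exact (le_S hμ h1).trans le_sup_right
    rcases Nat.lt_or_ge a (μ 0) with hc0 | hc0
    · -- μ 0 > a, hence μ 1 < b
      have hlt : μ 1 < b := by omega
      obtain ⟨w, u, hwD, huD, hw0, hw1, hw2, hu0, hu1, hu2, hle⟩ :=
        down hB 0 1 2 (by decide) (by decide) (by decide) hμ (by omega)
      exact hle.trans (sup_le (ih w hwD (by omega)) (ih u huD (by omega)))
    · have hc0' : μ 0 < a := by omega
      rcases Nat.lt_or_ge b (μ 1) with hc1 | hc1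
      · -- μ 1 > b
        obtain ⟨w, u, hwD, huD, hw1, hw0, hw2, hu1, hu0, hu2, hle⟩ :=
          down hB 1 0 2 (by decide) (by decide) (by decide) hμ (by omega)
        exact hle.trans (sup_le (ih w hwD (by omega)) (ih u huD (by omega)))
      · -- μ 0 < a, μ 1 < b, so μ 2 ≥ 1
        have hμ2 : 1 ≤ μ 2 := by omega
        obtain ⟨w, u, hwD, huD, hw2, hw0, hw1, hu2, hu0, hu1, hle⟩ :=
          down hB 2 0 1 (by decide) (by decide) (by decide) hμ hμ2
        exact hle.trans (sup_le (ih w hwD (by omega)) (ih u huD (by omega)))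

lemma S00_top {N : ℕ} {B : (Fin 3 → ℕ) → Submodule F V} [FiniteDimensional F V]
    (hB : BA.IsBilliardArray N B) (hV : finrank F V = N + 1) :
    S N B 0 0 = ⊤ :=
  Submodule.eq_top_of_finrank_eq (by rw [finrank_S hB (Nat.zero_le N) 0, hV]; omega)

lemma sup01_top {N : ℕ} {B : (Fin 3 → ℕ) → Submodule F V} [FiniteDimensional F V]
    (hB : BA.IsBilliardArray N B) (hV : finrank F V = N + 1) {a b : ℕ}
    (hab : a + b ≤ N + 1) : S N B 0 a ⊔ S N B 1 b = ⊤ := by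
  rw [eq_top_iff, ← S00_top hB hV]
  refine S_le fun v hv _ => ?_
  refine (contain2 hB (a := a) (b := N + 1 - a) (by omega) v hv).trans ?_
  exact sup_le_sup le_rfl (S_mono hB 1 (by omega))

lemma finrank_inf01 {N : ℕ} {B : (Fin 3 → ℕ) → Submodule F V} [FiniteDimensional F V]
    (hB : BA.IsBilliardArray N B) (hV : finrank F V = N + 1) {a b : ℕ}
    (ha : a ≤ N) (hb : b ≤ N) (hab : a + b ≤ N + 1) :
    finrank F ↥(S N B 0 a ⊓ S N B 1 b) = N + 1 - a - b := by
  have hfr := Submodule.finrank_sup_add_finrank_inf_eq (S N B 0 a) (S N B 1 b)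
  rw [sup01_top hB hV hab, finrank_top, hV, finrank_S hB ha 0, finrank_S hB hb 1] at hfr
  omega

lemma contain3 {N : ℕ} {B : (Fin 3 → ℕ) → Submodule F V} [FiniteDimensional F V]
    (hB : BA.IsBilliardArray N B) {a b c : ℕ} (habc : a + b + c = N + 1) :
    ∀ μ ∈ BA.Delta N, B μ ≤ (S N B 0 a ⊓ S N B 1 b) ⊔ S N B 2 c := by
  suffices H : ∀ k (μ : Fin 3 → ℕ), μ ∈ BA.Delta N →
      (c - μ 2) + (a - μ 0) + (b - μ 1) ≤ k →
      B μ ≤ (S N B 0 a ⊓ S N B 1 b) ⊔ S N B 2 c from fun μ hμ => H _ μ hμ le_rfl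
  intro k
  induction k with
  | zero =>
    intro μ hμ hk
    exact ((le_S hμ rfl).trans (S_mono hB 2 (by omega : c ≤ μ 2))).trans le_sup_right
  | succ k ih =>
    intro μ hμ hk
    have hμs : μ 0 + μ 1 + μ 2 = N := hμ
    by_cases h2 : c ≤ μ 2
    · exact ((le_S hμ rfl).trans (S_mono hB 2 h2)).trans le_sup_right
    have hab : a + b ≤ μ 0 + μ 1 := by omega
    by_cases h0 : a ≤ μ 0
    · by_cases h1 : b ≤ μ 1
      · refine le_trans ?_ le_sup_left
        exact le_inf ((le_S hμ rfl).trans (S_mono hB 0 h0))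
          ((le_S hμ rfl).trans (S_mono hB 1 h1))
      · -- μ 1 < b, so μ 0 > a
        obtain ⟨w, u, hwD, huD, hw0, hw1, hw2, hu0, hu1, hu2, hle⟩ :=
          down hB 0 1 2 (by decide) (by decide) (by decide) hμ (by omega)
        exact hle.trans (sup_le (ih w hwD (by omega)) (ih u huD (by omega)))
    · -- μ 0 < a, so μ 1 > b
      obtain ⟨w, u, hwD, huD, hw1, hw0, hw2, hu1, hu0, hu2, hle⟩ :=
        down hB 1 0 2 (by decide) (by decide) (by decide) hμ (by omega)
      exact hle.trans (sup_le (ih w hwD (by omega)) (ih u huD (by omega)))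

lemma triple_bot {N : ℕ} {B : (Fin 3 → ℕ) → Submodule F V} [FiniteDimensional F V]
    (hB : BA.IsBilliardArray N B) (hV : finrank F V = N + 1) {a b c : ℕ}
    (habc : a + b + c = N + 1) (ha : a ≤ N) (hb : b ≤ N) :
    (S N B 0 a ⊓ S N B 1 b) ⊓ S N B 2 c = ⊥ := by
  rcases Nat.lt_or_ge N c with hc | hc
  · rw [S_empty hc, inf_bot_eq]
  rcases Nat.eq_zero_or_pos c with hc0 | hc0
  · have hT : S N B 0 a ⊓ S N B 1 b = ⊥ := by
      rw [← Submodule.finrank_eq_zero (S := S N B 0 a ⊓ S N B 1 b),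
        finrank_inf01 hB hV ha hb (by omega)]
      omega
    rw [hT, bot_inf_eq]
  · have hT : finrank F ↥(S N B 0 a ⊓ S N B 1 b) = c :=
      (finrank_inf01 hB hV ha hb (by omega)).trans (by omega)
    have hsup : (S N B 0 a ⊓ S N B 1 b) ⊔ S N B 2 c = ⊤ := by
      rw [eq_top_iff, ← S00_top hB hV]
      exact S_le fun v hv _ => contain3 hB habc v hv
    have hfr := Submodule.finrank_sup_add_finrank_inf_eq
      (S N B 0 a ⊓ S N B 1 b) (S N B 2 c)
    rw [hsup, finrank_top, hV, hT, finrank_S hB hc 2] at hfr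
    rw [← Submodule.finrank_eq_zero (S := S N B 0 a ⊓ S N B 1 b ⊓ S N B 2 c)]
    omega


end BAaux

/-- A Billiard Array is injective on `Δ_N`. -/
theorem stmt16 {F V : Type*} [Field F] [AddCommGroup V] [Module F V] (N : ℕ)
    (hV : Module.finrank F V = N + 1) (B : (Fin 3 → ℕ) → Submodule F V)
    (hB : BA.IsBilliardArray N B)
    (l m : Fin 3 → ℕ) (hl : l ∈ BA.Delta N) (hm : m ∈ BA.Delta N)
    (h : B l = B m) : l = m := by
  haveI : FiniteDimensional F V := FiniteDimensional.of_finrank_pos (by omega)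
  by_contra hne
  have hls : l 0 + l 1 + l 2 = N := hl
  have hms : m 0 + m 1 + m 2 = N := hm
  have hlne : B l ≠ ⊥ := BAaux.ne_bot_of_finrank_one (hB.1 l hl)
  have hex : l 0 < m 0 ∨ l 1 < m 1 ∨ l 2 < m 2 := by
    by_contra hc
    push_neg at hc
    obtain ⟨h0, h1, h2⟩ := hc
    apply hne
    funext i; fin_cases i
    · show l 0 = m 0; omega
    · show l 1 = m 1; omega
    · show l 2 = m 2; omega
  have hm0 : m 0 ≤ N := BAaux.coord_le hm 0
  have hm1 : m 1 ≤ N := BAaux.coord_le hm 1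
  have hm2 : m 2 ≤ N := BAaux.coord_le hm 2
  rcases hex with hθ | hθ | hθ
  · have hbot := BAaux.triple_bot hB hV
      (a := l 0 + 1) (b := l 1) (c := l 2) (by omega) (by omega) (by omega)
    have h1 : B l ≤ BAaux.S N B 0 (l 0 + 1) := by
      rw [h]; exact (BAaux.le_S hm rfl).trans (BAaux.S_mono hB 0 (by omega))
    have h2 : B l ≤ BAaux.S N B 1 (l 1) := BAaux.le_S hl rfl
    have h3 : B l ≤ BAaux.S N B 2 (l 2) := BAaux.le_S hl rfl
    exact hlne (le_bot_iff.1 (hbot ▸ le_inf (le_inf h1 h2) h3))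
  · have hbot := BAaux.triple_bot hB hV
      (a := l 0) (b := l 1 + 1) (c := l 2) (by omega) (by omega) (by omega)
    have h1 : B l ≤ BAaux.S N B 0 (l 0) := BAaux.le_S hl rfl
    have h2 : B l ≤ BAaux.S N B 1 (l 1 + 1) := by
      rw [h]; exact (BAaux.le_S hm rfl).trans (BAaux.S_mono hB 1 (by omega))
    have h3 : B l ≤ BAaux.S N B 2 (l 2) := BAaux.le_S hl rfl
    exact hlne (le_bot_iff.1 (hbot ▸ le_inf (le_inf h1 h2) h3))
  · have hbot := BAaux.triple_bot hB hV
      (a := l 0) (b := l 1) (c := l 2 + 1) (by omega) (by omega) (by omega)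
    have h1 : B l ≤ BAaux.S N B 0 (l 0) := BAaux.le_S hl rfl
    have h2 : B l ≤ BAaux.S N B 1 (l 1) := BAaux.le_S hl rfl
    have h3 : B l ≤ BAaux.S N B 2 (l 2 + 1) := by
      rw [h]; exact (BAaux.le_S hm rfl).trans (BAaux.S_mono hB 2 (by omega))
    exact hlne (le_bot_iff.1 (hbot ▸ le_inf (le_inf h1 h2) h3))
end

section
/- Let F be a field, N a natural number, V an (N+1)-dimensional vector space over F, and B a Billiard Array on V. Let λ, μ, ν be locations in Δ_N that form a white 3-clique. Then the sum B_λ + B_μ + B_ν is direct, i.e., the three one-dimensional subspaces B_λ, B_μ, B_ν are independent. -/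
/-- The white 3-clique attached to `(r,s,t)`. -/
def BA.whiteSet (r s t : ℕ) : Set (Fin 3 → ℕ) :=
  {![r, s + 1, t + 1], ![r + 1, s, t + 1], ![r + 1, s + 1, t]}

namespace BAaux

section lattice

variable {α : Type*} [CompleteLattice α]

lemma biSup0 (f : Fin 3 → α) : (⨆ j, ⨆ _ : j ≠ (0 : Fin 3), f j) = f 1 ⊔ f 2 := by
  apply le_antisymm
  · apply iSup_le; intro j; apply iSup_le; intro hj
    fin_cases j
    · exact absurd rfl hj
    · exact le_sup_left
    · exact le_sup_right
  · exact sup_le (le_iSup₂_of_le 1 (by decide) le_rfl) (le_iSup₂_of_le 2 (by decide) le_rfl)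

lemma biSup1 (f : Fin 3 → α) : (⨆ j, ⨆ _ : j ≠ (1 : Fin 3), f j) = f 0 ⊔ f 2 := by
  apply le_antisymm
  · apply iSup_le; intro j; apply iSup_le; intro hj
    fin_cases j
    · exact le_sup_left
    · exact absurd rfl hj
    · exact le_sup_right
  · exact sup_le (le_iSup₂_of_le 0 (by decide) le_rfl) (le_iSup₂_of_le 2 (by decide) le_rfl)

lemma biSup2 (f : Fin 3 → α) : (⨆ j, ⨆ _ : j ≠ (2 : Fin 3), f j) = f 0 ⊔ f 1 := by
  apply le_antisymm
  · apply iSup_le; intro j; apply iSup_le; intro hj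
    fin_cases j
    · exact le_sup_left
    · exact le_sup_right
    · exact absurd rfl hj
  · exact sup_le (le_iSup₂_of_le 0 (by decide) le_rfl) (le_iSup₂_of_le 1 (by decide) le_rfl)

lemma indep3_iff (f : Fin 3 → α) :
    iSupIndep f ↔
      Disjoint (f 0) (f 1 ⊔ f 2) ∧ Disjoint (f 1) (f 0 ⊔ f 2) ∧ Disjoint (f 2) (f 0 ⊔ f 1) := by
  unfold iSupIndep
  constructor
  · intro h
    exact ⟨biSup0 f ▸ h 0, biSup1 f ▸ h 1, biSup2 f ▸ h 2⟩
  · rintro ⟨h0, h1, h2⟩ i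
    fin_cases i
    · rw [show (⟨0, by omega⟩ : Fin 3) = 0 from rfl, biSup0]; exact h0
    · rw [show (⟨1, by omega⟩ : Fin 3) = 1 from rfl, biSup1]; exact h1
    · rw [show (⟨2, by omega⟩ : Fin 3) = 2 from rfl, biSup2]; exact h2

lemma indep3_iff' (A B C : α) :
    iSupIndep ![A, B, C] ↔
      Disjoint A (B ⊔ C) ∧ Disjoint B (A ⊔ C) ∧ Disjoint C (A ⊔ B) := by
  have := indep3_iff ![A, B, C]
  simpa using this

lemma swap01 {A B C : α} (h : iSupIndep ![A, B, C]) : iSupIndep ![B, A, C] := by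
  rw [indep3_iff'] at h ⊢
  exact ⟨h.2.1, h.1, by rw [sup_comm]; exact h.2.2⟩

lemma swap12 {A B C : α} (h : iSupIndep ![A, B, C]) : iSupIndep ![A, C, B] := by
  rw [indep3_iff'] at h ⊢
  exact ⟨by rw [sup_comm]; exact h.1, h.2.2, h.2.1⟩

end lattice

section dims

variable {F V : Type*} [Field F] [AddCommGroup V] [Module F V] [FiniteDimensional F V]

lemma le_of_not_disjoint_s17 {A W : Submodule F V} (hA : Module.finrank F A = 1)
    (h : ¬ Disjoint A W) : A ≤ W := by
  have hne : A ⊓ W ≠ ⊥ := fun hb => h (disjoint_iff.mpr hb)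
  have h1 : 0 < Module.finrank F (A ⊓ W : Submodule F V) := by
    rcases Nat.eq_zero_or_pos (Module.finrank F (A ⊓ W : Submodule F V)) with h0 | h0
    · exact absurd (Submodule.finrank_eq_zero.mp h0) hne
    · exact h0
  have heq : A ⊓ W = A := Submodule.eq_of_le_of_finrank_le inf_le_left (by omega)
  rw [← heq]; exact inf_le_right

lemma finrank_sup_two {A B : Submodule F V} (hA : Module.finrank F A = 1)
    (hB : Module.finrank F B = 1) (h : Disjoint A B) :
    Module.finrank F (A ⊔ B : Submodule F V) = 2 := by
  have key := Submodule.finrank_sup_add_finrank_inf_eq A B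
  rw [disjoint_iff.mp h] at key
  simp only [finrank_bot] at key
  omega

lemma key_step {A B C : Submodule F V} (hA : Module.finrank F A = 1)
    (hB : Module.finrank F B = 1) (hC : Module.finrank F C = 1)
    (hAB : Disjoint A B) (h : B ≤ A ⊔ C) : C ≤ A ⊔ B := by
  have h1 : A ⊔ B ≤ A ⊔ C := sup_le le_sup_left h
  have h2 : Module.finrank F (A ⊔ B : Submodule F V) = 2 := finrank_sup_two hA hB hAB
  have h3 : Module.finrank F (A ⊔ C : Submodule F V) ≤ 2 := by
    have := Submodule.finrank_sup_add_finrank_inf_eq A C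
    omega
  have h4 : A ⊔ B = A ⊔ C := Submodule.eq_of_le_of_finrank_le h1 (by omega)
  rw [h4]; exact le_sup_right

end dims

section billiard

variable {F V : Type*} [Field F] [AddCommGroup V] [Module F V]
variable {N : ℕ} {B : (Fin 3 → ℕ) → Submodule F V}

lemma mem_delta {a b c : ℕ} (h : a + b + c = N) : ![a, b, c] ∈ BA.Delta N := by
  simp only [BA.Delta, Set.mem_setOf_eq, Matrix.cons_val_zero, Matrix.cons_val_one,
    Matrix.head_cons, Matrix.cons_val_two, Matrix.tail_cons]
  exact h

lemma vec_ne {a b c a' b' c' : ℕ} (h : ¬(a = a' ∧ b = b' ∧ c = c')) :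
    ![a, b, c] ≠ ![a', b', c'] := by
  intro he
  have h0 := congrFun he 0
  have h1 := congrFun he 1
  have h2 := congrFun he 2
  simp only [Matrix.cons_val_zero, Matrix.cons_val_one, Matrix.head_cons,
    Matrix.cons_val_two, Matrix.tail_cons] at h0 h1 h2
  exact h ⟨h0, h1, h2⟩

lemma line_disjoint_s17 (hB : BA.IsBilliardArray N B) (η : Fin 3) {x y : Fin 3 → ℕ}
    (hx : x ∈ BA.Delta N) (hy : y ∈ BA.Delta N) (hxy : x ≠ y) (hη : x η = y η) :
    Disjoint (B x) (B y) := by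
  have hy' : y 0 + y 1 + y 2 = N := hy
  have hc : y η ≤ N := by
    fin_cases η
    · show y 0 ≤ N; omega
    · show y 1 ≤ N; omega
    · show y 2 ≤ N; omega
  have hL : BA.IsLine N {v ∈ BA.Delta N | v η = y η} := ⟨η, y η, hc, rfl⟩
  have hind := hB.2.1 _ hL
  have hpd := hind.pairwiseDisjoint
    (i := (⟨x, ⟨hx, hη⟩⟩ : {v // v ∈ {v ∈ BA.Delta N | v η = y η}}))
    (j := ⟨y, ⟨hy, rfl⟩⟩)
    (by intro h; exact hxy (congrArg Subtype.val h))
  exact hpd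

lemma black_le_s17 [FiniteDimensional F V] (hB : BA.IsBilliardArray N B)
    (r s t : ℕ) (hN : r + s + t + 1 = N) :
    B ![r, s, t + 1] ≤ B ![r + 1, s, t] ⊔ B ![r, s + 1, t] := by
  have hu : ![r + 1, s, t] ∈ BA.Delta N := mem_delta (by omega)
  have hv : ![r, s + 1, t] ∈ BA.Delta N := mem_delta (by omega)
  have hw : ![r, s, t + 1] ∈ BA.Delta N := mem_delta (by omega)
  have fu := hB.1 _ hu
  have fv := hB.1 _ hv
  have fw := hB.1 _ hw
  have duv : Disjoint (B ![r + 1, s, t]) (B ![r, s + 1, t]) :=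
    line_disjoint_s17 hB 2 hu hv (vec_ne (by omega)) (by simp)
  have duw : Disjoint (B ![r + 1, s, t]) (B ![r, s, t + 1]) :=
    line_disjoint_s17 hB 1 hu hw (vec_ne (by omega)) (by simp)
  have dvw : Disjoint (B ![r, s + 1, t]) (B ![r, s, t + 1]) :=
    line_disjoint_s17 hB 0 hv hw (vec_ne (by omega)) (by simp)
  have hnind := hB.2.2 r s t hN
  unfold iSupIndep at hnind
  push_neg at hnind
  obtain ⟨⟨x, hx⟩, hnd⟩ := hnind
  have hx' : x = ![r + 1, s, t] ∨ x = ![r, s + 1, t] ∨ x = ![r, s, t + 1] := by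
    simpa [BA.blackSet] using hx
  rcases hx' with rfl | rfl | rfl
  · -- x = u : B u ≤ B v ⊔ B w
    have hle : (⨆ j : (BA.blackSet r s t), ⨆ _ : j ≠ ⟨_, hx⟩, B j.1) ≤
        B ![r, s + 1, t] ⊔ B ![r, s, t + 1] := by
      apply iSup_le; rintro ⟨y, hy⟩; apply iSup_le; intro hne
      have hy' : y = ![r + 1, s, t] ∨ y = ![r, s + 1, t] ∨ y = ![r, s, t + 1] := by
        simpa [BA.blackSet] using hy
      rcases hy' with rfl | rfl | rfl
      · exact absurd (Subtype.ext rfl) hne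
      · exact le_sup_left
      · exact le_sup_right
    have hnd2 : ¬ Disjoint (B ![r + 1, s, t]) (B ![r, s + 1, t] ⊔ B ![r, s, t + 1]) :=
      fun hd => hnd (hd.mono_right hle)
    have h1 := le_of_not_disjoint_s17 fu hnd2
    have h2 := key_step fv fu fw duv.symm h1
    rwa [sup_comm] at h2
  · -- x = v : B v ≤ B u ⊔ B w
    have hle : (⨆ j : (BA.blackSet r s t), ⨆ _ : j ≠ ⟨_, hx⟩, B j.1) ≤
        B ![r + 1, s, t] ⊔ B ![r, s, t + 1] := by
      apply iSup_le; rintro ⟨y, hy⟩; apply iSup_le; intro hne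
      have hy' : y = ![r + 1, s, t] ∨ y = ![r, s + 1, t] ∨ y = ![r, s, t + 1] := by
        simpa [BA.blackSet] using hy
      rcases hy' with rfl | rfl | rfl
      · exact le_sup_left
      · exact absurd (Subtype.ext rfl) hne
      · exact le_sup_right
    have hnd2 : ¬ Disjoint (B ![r, s + 1, t]) (B ![r + 1, s, t] ⊔ B ![r, s, t + 1]) :=
      fun hd => hnd (hd.mono_right hle)
    have h1 := le_of_not_disjoint_s17 fv hnd2
    exact key_step fu fv fw duv h1
  · -- x = w : directly
    have hle : (⨆ j : (BA.blackSet r s t), ⨆ _ : j ≠ ⟨_, hx⟩, B j.1) ≤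
        B ![r + 1, s, t] ⊔ B ![r, s + 1, t] := by
      apply iSup_le; rintro ⟨y, hy⟩; apply iSup_le; intro hne
      have hy' : y = ![r + 1, s, t] ∨ y = ![r, s + 1, t] ∨ y = ![r, s, t + 1] := by
        simpa [BA.blackSet] using hy
      rcases hy' with rfl | rfl | rfl
      · exact le_sup_left
      · exact le_sup_right
      · exact absurd (Subtype.ext rfl) hne
    have hnd2 : ¬ Disjoint (B ![r, s, t + 1]) (B ![r + 1, s, t] ⊔ B ![r, s + 1, t]) :=
      fun hd => hnd (hd.mono_right hle)
    exact le_of_not_disjoint_s17 fw hnd2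

lemma white_key [FiniteDimensional F V] (hB : BA.IsBilliardArray N B)
    (r s t : ℕ) (hN : r + s + t + 2 = N) :
    iSupIndep ![B ![r, s + 1, t + 1], B ![r + 1, s, t + 1], B ![r + 1, s + 1, t]] := by
  by_contra hcon
  have ha : ![r, s + 1, t + 1] ∈ BA.Delta N := mem_delta (by omega)
  have hb : ![r + 1, s, t + 1] ∈ BA.Delta N := mem_delta (by omega)
  have hc : ![r + 1, s + 1, t] ∈ BA.Delta N := mem_delta (by omega)
  have fa := hB.1 _ ha
  have fb := hB.1 _ hb
  have fc := hB.1 _ hc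
  have dab : Disjoint (B ![r, s + 1, t + 1]) (B ![r + 1, s, t + 1]) :=
    line_disjoint_s17 hB 2 ha hb (vec_ne (by omega)) (by simp)
  have dac : Disjoint (B ![r, s + 1, t + 1]) (B ![r + 1, s + 1, t]) :=
    line_disjoint_s17 hB 1 ha hc (vec_ne (by omega)) (by simp)
  have dbc : Disjoint (B ![r + 1, s, t + 1]) (B ![r + 1, s + 1, t]) :=
    line_disjoint_s17 hB 0 hb hc (vec_ne (by omega)) (by simp)
  rw [indep3_iff'] at hcon
  -- from non-directness of the white clique, B c ≤ B a ⊔ B b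
  have hcle : B ![r + 1, s + 1, t] ≤ B ![r, s + 1, t + 1] ⊔ B ![r + 1, s, t + 1] := by
    rcases not_and_or.mp hcon with h | h
    · have h1 := le_of_not_disjoint_s17 fa h
      have h2 := key_step fb fa fc dab.symm h1
      rwa [sup_comm] at h2
    · rcases not_and_or.mp h with h | h
      · have h1 := le_of_not_disjoint_s17 fb h
        exact key_step fa fb fc dab h1
      · exact le_of_not_disjoint_s17 fc h
  -- black clique at (r,s,t+1) : B p1 ≤ W where p1 = (r,s,t+2)
  have hp1mem : ![r, s, t + 1 + 1] ∈ BA.Delta N := mem_delta (by omega)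
  have hp2mem : ![r, s + 1 + 1, t] ∈ BA.Delta N := mem_delta (by omega)
  have fp1 := hB.1 _ hp1mem
  have fp2 := hB.1 _ hp2mem
  have hp1 : B ![r, s, t + 1 + 1] ≤ B ![r, s + 1, t + 1] ⊔ B ![r + 1, s, t + 1] := by
    have h1 := black_le_s17 hB r s (t + 1) (by omega)
    rwa [sup_comm] at h1
  -- black clique at (r,s+1,t) : B a ≤ B c ⊔ B p2, hence B p2 ≤ B c ⊔ B a ≤ W
  have hp2' := black_le_s17 hB r (s + 1) t (by omega)
  have hp2'' : B ![r, s + 1 + 1, t] ≤ B ![r + 1, s + 1, t] ⊔ B ![r, s + 1, t + 1] :=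
    key_step fc fa fp2 dac.symm hp2'
  have hp2W : B ![r, s + 1 + 1, t] ≤ B ![r, s + 1, t + 1] ⊔ B ![r + 1, s, t + 1] :=
    hp2''.trans (sup_le hcle le_sup_left)
  -- a, p1, p2 all lie on line η = 0, c = r, and are all inside the 2-dim W
  have dap2 : Disjoint (B ![r, s + 1, t + 1]) (B ![r, s + 1 + 1, t]) :=
    line_disjoint_s17 hB 0 ha hp2mem (vec_ne (by omega)) (by simp)
  have hW2 : Module.finrank F
      (B ![r, s + 1, t + 1] ⊔ B ![r + 1, s, t + 1] : Submodule F V) = 2 :=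
    finrank_sup_two fa fb dab
  have hsup2 : Module.finrank F
      (B ![r, s + 1, t + 1] ⊔ B ![r, s + 1 + 1, t] : Submodule F V) = 2 :=
    finrank_sup_two fa fp2 dap2
  have hWeq : B ![r, s + 1, t + 1] ⊔ B ![r, s + 1 + 1, t] =
      B ![r, s + 1, t + 1] ⊔ B ![r + 1, s, t + 1] :=
    Submodule.eq_of_le_of_finrank_le (sup_le le_sup_left hp2W) (by omega)
  -- line with first coordinate r
  have hrN : r ≤ N := by omega
  have hL : BA.IsLine N {v ∈ BA.Delta N | v 0 = r} := ⟨0, r, hrN, rfl⟩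
  have hind := hB.2.1 _ hL
  have hd := hind (⟨![r, s, t + 1 + 1], ⟨hp1mem, by simp⟩⟩ :
    {v // v ∈ {v ∈ BA.Delta N | v 0 = r}})
  have hle2 : B ![r, s + 1, t + 1] ⊔ B ![r, s + 1 + 1, t] ≤
      ⨆ j : {v // v ∈ {v ∈ BA.Delta N | v 0 = r}},
        ⨆ _ : j ≠ ⟨![r, s, t + 1 + 1], ⟨hp1mem, by simp⟩⟩, B j.1 := by
    apply sup_le
    · exact le_iSup₂_of_le ⟨![r, s + 1, t + 1], ⟨ha, by simp⟩⟩
        (by intro h; exact vec_ne (by omega) (congrArg Subtype.val h)) le_rfl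
    · exact le_iSup₂_of_le ⟨![r, s + 1 + 1, t], ⟨hp2mem, by simp⟩⟩
        (by intro h; exact vec_ne (by omega) (congrArg Subtype.val h)) le_rfl
  have hdisj : Disjoint (B ![r, s, t + 1 + 1])
      (B ![r, s + 1, t + 1] ⊔ B ![r, s + 1 + 1, t]) := hd.mono_right hle2
  have hp1le : B ![r, s, t + 1 + 1] ≤ B ![r, s + 1, t + 1] ⊔ B ![r, s + 1 + 1, t] := by
    rw [hWeq]; exact hp1
  have hbot := hdisj.eq_bot_of_le hp1le
  rw [hbot] at fp1
  simp at fp1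

end billiard

end BAaux

set_option maxHeartbeats 1000000 in
/-- For a Billiard Array `B` on `V` and locations `λ, μ, ν` forming a white
3-clique in `Δ_N`, the sum `B_λ + B_μ + B_ν` is direct. -/
theorem stmt17 {F V : Type*} [Field F] [AddCommGroup V] [Module F V] (N : ℕ)
    (hV : Module.finrank F V = N + 1) (B : (Fin 3 → ℕ) → Submodule F V)
    (hB : BA.IsBilliardArray N B)
    (l m n : Fin 3 → ℕ)
    (hw : ∃ r s t : ℕ, r + s + t + 2 = N ∧
      ({l, m, n} : Set (Fin 3 → ℕ)) = BA.whiteSet r s t) :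
    iSupIndep ![B l, B m, B n] := by
  haveI : FiniteDimensional F V := FiniteDimensional.of_finrank_pos (by omega)
  obtain ⟨r, s, t, hN, hset⟩ := hw
  have key := BAaux.white_key hB r s t hN
  have hAB : ![r, s + 1, t + 1] ≠ ![r + 1, s, t + 1] := BAaux.vec_ne (by omega)
  have hBA : ![r + 1, s, t + 1] ≠ ![r, s + 1, t + 1] := hAB.symm
  have hAC : ![r, s + 1, t + 1] ≠ ![r + 1, s + 1, t] := BAaux.vec_ne (by omega)
  have hCA : ![r + 1, s + 1, t] ≠ ![r, s + 1, t + 1] := hAC.symm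
  have hBC : ![r + 1, s, t + 1] ≠ ![r + 1, s + 1, t] := BAaux.vec_ne (by omega)
  have hCB : ![r + 1, s + 1, t] ≠ ![r + 1, s, t + 1] := hBC.symm
  have hl : l = ![r, s + 1, t + 1] ∨ l = ![r + 1, s, t + 1] ∨ l = ![r + 1, s + 1, t] := by
    have : l ∈ ({l, m, n} : Set (Fin 3 → ℕ)) := by simp
    rw [hset] at this
    simpa [BA.whiteSet] using this
  have hm : m = ![r, s + 1, t + 1] ∨ m = ![r + 1, s, t + 1] ∨ m = ![r + 1, s + 1, t] := by
    have : m ∈ ({l, m, n} : Set (Fin 3 → ℕ)) := by simp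
    rw [hset] at this
    simpa [BA.whiteSet] using this
  have hn : n = ![r, s + 1, t + 1] ∨ n = ![r + 1, s, t + 1] ∨ n = ![r + 1, s + 1, t] := by
    have : n ∈ ({l, m, n} : Set (Fin 3 → ℕ)) := by simp
    rw [hset] at this
    simpa [BA.whiteSet] using this
  have hmema : ![r, s + 1, t + 1] ∈ ({l, m, n} : Set (Fin 3 → ℕ)) := by
    rw [hset]; simp [BA.whiteSet]
  have hmemb : ![r + 1, s, t + 1] ∈ ({l, m, n} : Set (Fin 3 → ℕ)) := by
    rw [hset]; simp [BA.whiteSet]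
  have hmemc : ![r + 1, s + 1, t] ∈ ({l, m, n} : Set (Fin 3 → ℕ)) := by
    rw [hset]; simp [BA.whiteSet]
  clear hset
  have key2 := BAaux.swap01 key
  have key3 := BAaux.swap12 key
  have key4 := BAaux.swap12 key2
  have key5 := BAaux.swap01 key3
  have key6 := BAaux.swap12 key5
  simp only [Set.mem_insert_iff, Set.mem_singleton_iff] at hmema hmemb hmemc
  rcases hl with rfl | rfl | rfl <;> rcases hm with rfl | rfl | rfl <;>
    rcases hn with rfl | rfl | rfl <;>
    first
      | exact key | exact key2 | exact key3 | exact key4 | exact key5 | exact key6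
      | tauto
end

section
/- Let F be a field, N a natural number, V an (N+1)-dimensional vector space over F, and B a Billiard Array on V. Let λ, μ be adjacent locations in Δ_N and let ν be the unique location in Δ_N such that {λ, μ, ν} is a black 3-clique. Then for every nonzero vector u ∈ B_λ there exists a unique vector v ∈ B_μ such that v ≠ 0 and u + v ∈ B_ν (i.e., every nonzero u ∈ B_λ is contained in a unique brace for the edge {λ,μ}). -/
/-- Adjacency: `u - v = e_i - e_j` (computed in `ℤ³`) for some `i ≠ j`. -/
def BA.Adj (u v : Fin 3 → ℕ) : Prop :=
  ∃ i j : Fin 3, i ≠ j ∧ ∀ k, (u k : ℤ) - (v k : ℤ) =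
    (if k = i then 1 else 0) - (if k = j then 1 else 0)

lemma BA.gen_of_finrank_one {F V : Type*} [Field F] [AddCommGroup V] [Module F V]
    {W : Submodule F V} (h : Module.finrank F W = 1) :
    ∃ x, x ∈ W ∧ x ≠ 0 ∧ ∀ w ∈ W, ∃ c : F, w = c • x := by
  obtain ⟨v, hv0, hv⟩ := finrank_eq_one_iff'.mp h
  refine ⟨v.1, v.2, by simpa using hv0, ?_⟩
  intro w hw
  obtain ⟨c, hc⟩ := hv ⟨w, hw⟩
  exact ⟨c, by simpa using congrArg Subtype.val hc.symm⟩

lemma BA.pigeon {α : Type*} {p1 p2 p3 a b : α} (d12 : p1 ≠ p2) (d13 : p1 ≠ p3)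
    (d23 : p2 ≠ p3) (h1 : p1 = a ∨ p1 = b) (h2 : p2 = a ∨ p2 = b)
    (h3 : p3 = a ∨ p3 = b) : False := by
  rcases h1 with h1 | h1 <;> rcases h2 with h2 | h2 <;> rcases h3 with h3 | h3 <;> simp_all

lemma BA.key2 {F V : Type*} [Field F] [AddCommGroup V] [Module F V]
    {P Q : Submodule F V} {p q : F} {u w : V} (hu : u ∈ P) (hw : w ∈ Q)
    (hd : Disjoint P Q) (hu0 : u ≠ 0) (hw0 : w ≠ 0)
    (hpq : p • u + q • w = 0) : p = 0 ∧ q = 0 := by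
  have h1 : p • u = -(q • w) := eq_neg_of_add_eq_zero_left hpq
  have hm : p • u ∈ Q := h1 ▸ Q.neg_mem (Q.smul_mem q hw)
  have h0 : p • u = 0 := Submodule.disjoint_def.mp hd _ (P.smul_mem p hu) hm
  have hp : p = 0 := (smul_eq_zero.mp h0).resolve_right hu0
  subst hp
  simp only [zero_smul, zero_add] at hpq
  exact ⟨rfl, (smul_eq_zero.mp hpq).resolve_right hw0⟩

lemma BA.allnonzero {F V : Type*} [Field F] [AddCommGroup V] [Module F V]
    {A B C : Submodule F V} {x y z : V}
    (hx : x ∈ A) (hy : y ∈ B) (hz : z ∈ C)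
    (hx0 : x ≠ 0) (hy0 : y ≠ 0) (hz0 : z ≠ 0)
    (dAB : Disjoint A B) (dAC : Disjoint A C) (dBC : Disjoint B C)
    {a b c : F} (hrel : a • x + b • y + c • z = 0)
    (hne : a ≠ 0 ∨ b ≠ 0 ∨ c ≠ 0) : a ≠ 0 ∧ b ≠ 0 ∧ c ≠ 0 := by
  by_cases ha : a = 0
  · subst ha
    simp only [zero_smul, zero_add] at hrel
    obtain ⟨hb, hc⟩ := BA.key2 hy hz dBC hy0 hz0 hrel
    simp [hb, hc] at hne
  by_cases hb : b = 0
  · subst hb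
    simp only [zero_smul, add_zero] at hrel
    obtain ⟨ha', hc⟩ := BA.key2 hx hz dAC hx0 hz0 hrel
    exact absurd ha' ha
  by_cases hc : c = 0
  · subst hc
    simp only [zero_smul, add_zero] at hrel
    obtain ⟨ha', hb'⟩ := BA.key2 hx hy dAB hx0 hy0 hrel
    exact absurd ha' ha
  exact ⟨ha, hb, hc⟩

/-- Let `B` be a Billiard Array on `V`, let `λ, μ` be adjacent locations in
`Δ_N`, and let `ν` be the location such that `{λ,μ,ν}` is a black 3-clique.
Then every nonzero `u ∈ B_λ` lies in a unique brace for the edge `{λ,μ}`: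
there is a unique `v ∈ B_μ` with `v ≠ 0` and `u + v ∈ B_ν`. -/
theorem stmt18 {F V : Type*} [Field F] [AddCommGroup V] [Module F V] (N : ℕ)
    (hV : Module.finrank F V = N + 1) (B : (Fin 3 → ℕ) → Submodule F V)
    (hB : BA.IsBilliardArray N B)
    (l m n : Fin 3 → ℕ) (hl : l ∈ BA.Delta N) (hm : m ∈ BA.Delta N)
    (hadj : BA.Adj l m)
    (hblack : ∃ r s t : ℕ, r + s + t + 1 = N ∧
      ({l, m, n} : Set (Fin 3 → ℕ)) = BA.blackSet r s t) :
    ∀ u ∈ B l, u ≠ 0 → ∃! v : V, v ∈ B m ∧ v ≠ 0 ∧ u + v ∈ B n := by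
  obtain ⟨r, s, t, hrst, hset⟩ := hblack
  have hmemS : ∀ p ∈ BA.blackSet r s t, p = l ∨ p = m ∨ p = n := by
    intro p hp
    rw [← hset] at hp
    simpa using hp
  have hS : ∀ p ∈ ({l, m, n} : Set (Fin 3 → ℕ)), p ∈ BA.blackSet r s t := by
    rw [hset]; exact fun p hp => hp
  have hlS : l ∈ BA.blackSet r s t := hS l (by simp)
  have hmS : m ∈ BA.blackSet r s t := hS m (by simp)
  have hnS : n ∈ BA.blackSet r s t := hS n (by simp)
  have hSD : ∀ p ∈ BA.blackSet r s t, p ∈ BA.Delta N := by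
    intro p hp
    simp only [BA.blackSet, Set.mem_insert_iff, Set.mem_singleton_iff] at hp
    rcases hp with hp | hp | hp <;> subst hp <;> simp [BA.Delta] <;> omega
  -- pairwise disjointness on the clique
  have hdisj : ∀ p ∈ BA.blackSet r s t, ∀ q ∈ BA.blackSet r s t, p ≠ q →
      Disjoint (B p) (B q) := by
    intro p hp q hq hpq
    have hpD := hSD p hp
    have hqD := hSD q hq
    have line : ∀ (η : Fin 3) (c : ℕ), c ≤ N → p η = c → q η = c →
        Disjoint (B p) (B q) := by
      intro η c hc hpc hqc
      have hind := hB.2.1 {v ∈ BA.Delta N | v η = c} ⟨η, c, hc, rfl⟩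
      have hne : (⟨p, ⟨hpD, hpc⟩⟩ : {v ∈ BA.Delta N | v η = c}) ≠ ⟨q, ⟨hqD, hqc⟩⟩ :=
        fun hcon => hpq (congrArg Subtype.val hcon)
      exact hind.pairwiseDisjoint hne
    simp only [BA.blackSet, Set.mem_insert_iff, Set.mem_singleton_iff] at hp hq
    rcases hp with hp | hp | hp <;> rcases hq with hq | hq | hq
    · exact absurd (hp.trans hq.symm) hpq
    · exact line 2 t (by omega) (by rw [hp]; try simp) (by rw [hq]; try simp)
    · exact line 1 s (by omega) (by rw [hp]; try simp) (by rw [hq]; try simp)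
    · exact line 2 t (by omega) (by rw [hp]; try simp) (by rw [hq]; try simp)
    · exact absurd (hp.trans hq.symm) hpq
    · exact line 0 r (by omega) (by rw [hp]; try simp) (by rw [hq]; try simp)
    · exact line 1 s (by omega) (by rw [hp]; try simp) (by rw [hq]; try simp)
    · exact line 0 r (by omega) (by rw [hp]; try simp) (by rw [hq]; try simp)
    · exact absurd (hp.trans hq.symm) hpq
  -- distinctness
  have hlm : l ≠ m := by
    obtain ⟨i, j, hij, hd⟩ := hadj
    intro he
    have := hd i
    rw [he] at this
    simp [hij] at this
  have d12 : (![r + 1, s, t] : Fin 3 → ℕ) ≠ ![r, s + 1, t] := by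
    intro h; have := congrFun h 0; simp at this
  have d13 : (![r + 1, s, t] : Fin 3 → ℕ) ≠ ![r, s, t + 1] := by
    intro h; have := congrFun h 0; simp at this
  have d23 : (![r, s + 1, t] : Fin 3 → ℕ) ≠ ![r, s, t + 1] := by
    intro h; have := congrFun h 1; simp at this
  have h1 := hmemS ![r + 1, s, t] (by simp [BA.blackSet])
  have h2 := hmemS ![r, s + 1, t] (by simp [BA.blackSet])
  have h3 := hmemS ![r, s, t + 1] (by simp [BA.blackSet])
  have hnl : n ≠ l := by
    intro h
    rw [h] at h1 h2 h3
    exact BA.pigeon d12 d13 d23 (by tauto) (by tauto) (by tauto)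
  have hnm : n ≠ m := by
    intro h
    rw [h] at h1 h2 h3
    exact BA.pigeon d12 d13 d23 (by tauto) (by tauto) (by tauto)
  have hnD : n ∈ BA.Delta N := hSD n hnS
  -- generators
  obtain ⟨x, hxl, hx0, hxgen⟩ := BA.gen_of_finrank_one (hB.1 l hl)
  obtain ⟨y, hym, hy0, hygen⟩ := BA.gen_of_finrank_one (hB.1 m hm)
  obtain ⟨z, hzn, hz0, hzgen⟩ := BA.gen_of_finrank_one (hB.1 n hnD)
  have dlm := hdisj l hlS m hmS hlm
  have dln := hdisj l hlS n hnS (Ne.symm hnl)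
  have dmn := hdisj m hmS n hnS (Ne.symm hnm)
  -- the dependency relation
  have hrel : ∃ a b c : F, a ≠ 0 ∧ b ≠ 0 ∧ c ≠ 0 ∧ a • x + b • y + c • z = 0 := by
    have hnind := hB.2.2 r s t hrst
    unfold iSupIndep at hnind
    push_neg at hnind
    obtain ⟨i, hi⟩ := hnind
    rw [Submodule.disjoint_def] at hi
    push_neg at hi
    obtain ⟨w, hwB, hwS, hw0⟩ := hi
    rcases hmemS i.1 i.2 with hil | him | hin
    · have hle : (⨆ j, ⨆ (_ : j ≠ i), B j.1) ≤ B m ⊔ B n := by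
        refine iSup_le fun j => iSup_le fun hj => ?_
        rcases hmemS j.1 j.2 with h | h | h
        · exact absurd (Subtype.ext (h.trans hil.symm)) hj
        · rw [h]; exact le_sup_left
        · rw [h]; exact le_sup_right
      obtain ⟨w1, hw1, w2, hw2, hw12⟩ := Submodule.mem_sup.mp (hle hwS)
      rw [hil] at hwB
      obtain ⟨α, hα⟩ := hxgen w hwB
      obtain ⟨β, hβ⟩ := hygen w1 hw1
      obtain ⟨γ, hγ⟩ := hzgen w2 hw2
      have hα0 : α ≠ 0 := fun h => hw0 (by rw [hα, h, zero_smul])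
      have hr : α • x + (-β) • y + (-γ) • z = 0 := by
        have e : α • x + (-β) • y + (-γ) • z = w - (w1 + w2) := by
          rw [hα, hβ, hγ]; module
        rw [e, ← hw12, sub_self]
      obtain ⟨ha, hb, hc⟩ := BA.allnonzero hxl hym hzn hx0 hy0 hz0 dlm dln dmn hr
        (Or.inl hα0)
      exact ⟨_, _, _, ha, hb, hc, hr⟩
    · have hle : (⨆ j, ⨆ (_ : j ≠ i), B j.1) ≤ B l ⊔ B n := by
        refine iSup_le fun j => iSup_le fun hj => ?_
        rcases hmemS j.1 j.2 with h | h | h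
        · rw [h]; exact le_sup_left
        · exact absurd (Subtype.ext (h.trans him.symm)) hj
        · rw [h]; exact le_sup_right
      obtain ⟨w1, hw1, w2, hw2, hw12⟩ := Submodule.mem_sup.mp (hle hwS)
      rw [him] at hwB
      obtain ⟨α, hα⟩ := hygen w hwB
      obtain ⟨β, hβ⟩ := hxgen w1 hw1
      obtain ⟨γ, hγ⟩ := hzgen w2 hw2
      have hα0 : α ≠ 0 := fun h => hw0 (by rw [hα, h, zero_smul])
      have hr : (-β) • x + α • y + (-γ) • z = 0 := by
        have e : (-β) • x + α • y + (-γ) • z = w - (w1 + w2) := by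
          rw [hα, hβ, hγ]; module
        rw [e, ← hw12, sub_self]
      obtain ⟨ha, hb, hc⟩ := BA.allnonzero hxl hym hzn hx0 hy0 hz0 dlm dln dmn hr
        (Or.inr (Or.inl hα0))
      exact ⟨_, _, _, ha, hb, hc, hr⟩
    · have hle : (⨆ j, ⨆ (_ : j ≠ i), B j.1) ≤ B l ⊔ B m := by
        refine iSup_le fun j => iSup_le fun hj => ?_
        rcases hmemS j.1 j.2 with h | h | h
        · rw [h]; exact le_sup_left
        · rw [h]; exact le_sup_right
        · exact absurd (Subtype.ext (h.trans hin.symm)) hj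
      obtain ⟨w1, hw1, w2, hw2, hw12⟩ := Submodule.mem_sup.mp (hle hwS)
      rw [hin] at hwB
      obtain ⟨α, hα⟩ := hzgen w hwB
      obtain ⟨β, hβ⟩ := hxgen w1 hw1
      obtain ⟨γ, hγ⟩ := hygen w2 hw2
      have hα0 : α ≠ 0 := fun h => hw0 (by rw [hα, h, zero_smul])
      have hr : (-β) • x + (-γ) • y + α • z = 0 := by
        have e : (-β) • x + (-γ) • y + α • z = w - (w1 + w2) := by
          rw [hα, hβ, hγ]; module
        rw [e, ← hw12, sub_self]
      obtain ⟨ha, hb, hc⟩ := BA.allnonzero hxl hym hzn hx0 hy0 hz0 dlm dln dmn hr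
        (Or.inr (Or.inr hα0))
      exact ⟨_, _, _, ha, hb, hc, hr⟩
  -- final argument
  intro u hu hu0
  obtain ⟨a, b, c, ha, hb, hc, hrel⟩ := hrel
  obtain ⟨d, hd⟩ := hxgen u hu
  have hd0 : d ≠ 0 := fun h => hu0 (by rw [hd, h, zero_smul])
  have ex : x = a⁻¹ • (-(b • y + c • z)) := by
    have h1 : a • x = -(b • y + c • z) := by
      rw [add_assoc] at hrel
      exact eq_neg_of_add_eq_zero_left hrel
    rw [← h1, inv_smul_smul₀ ha]
  have key : u + (d * b * a⁻¹) • y = (-(d * c * a⁻¹)) • z := by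
    rw [hd, ex]; module
  have hvn : u + (d * b * a⁻¹) • y ∈ B n := by
    rw [key]; exact Submodule.smul_mem _ _ hzn
  refine ⟨(d * b * a⁻¹) • y, ⟨Submodule.smul_mem _ _ hym,
    smul_ne_zero (mul_ne_zero (mul_ne_zero hd0 hb) (inv_ne_zero ha)) hy0, hvn⟩, ?_⟩
  rintro v' ⟨hv'm, hv'0, hv'n⟩
  have h1 : v' - (d * b * a⁻¹) • y ∈ B m :=
    Submodule.sub_mem _ hv'm (Submodule.smul_mem _ _ hym)
  have h2 : v' - (d * b * a⁻¹) • y ∈ B n := by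
    have h3 := Submodule.sub_mem _ hv'n hvn
    simpa using h3
  exact sub_eq_zero.mp (Submodule.disjoint_def.mp dmn _ h1 h2)
end

section
/- Let F be a field and let N ≥ 1 be an integer. In the polynomial ring F[x,y,z], for each location λ = (r,s,t) in Δ_N define the polynomial P_λ = (x−y)^r (y−z)^s (z−x)^t. Then: (i) for each line L in Δ_N the polynomials (P_λ)_{λ∈L} are linearly independent over F; (ii) for each black 3-clique C in Δ_N the polynomials (P_λ)_{λ∈C} are linearly dependent over F. (In other words, the map λ ↦ P_λ is a Concrete Billiard Array.) -/
/-- The polynomial `(x-y)^r (y-z)^s (z-x)^t` attached to the location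
`(r,s,t)`. -/
noncomputable def BA.P (F : Type*) [Field F] (v : Fin 3 → ℕ) :
    MvPolynomial (Fin 3) F :=
  (MvPolynomial.X 0 - MvPolynomial.X 1) ^ v 0 *
    (MvPolynomial.X 1 - MvPolynomial.X 2) ^ v 1 *
    (MvPolynomial.X 2 - MvPolynomial.X 0) ^ v 2


open MvPolynomial in
private lemma BA.black_sum (F : Type*) [Field F] (r s t : ℕ) :
    BA.P F ![r + 1, s, t] + BA.P F ![r, s + 1, t] + BA.P F ![r, s, t + 1] = 0 := by
  have key : ∀ (A B C : MvPolynomial (Fin 3) F), A + B + C = 0 →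
      A ^ (r+1) * B ^ s * C ^ t + A ^ r * B ^ (s+1) * C ^ t + A ^ r * B ^ s * C ^ (t+1) = 0 := by
    intro A B C h
    rw [pow_succ, pow_succ, pow_succ]
    linear_combination (A ^ r * B ^ s * C ^ t) * h
  simp only [BA.P, Matrix.cons_val_zero, Matrix.cons_val_one, Matrix.head_cons,
    Matrix.cons_val_two, Matrix.tail_cons]
  exact key _ _ _ (by ring)

open MvPolynomial Finsupp in
private lemma BA.aux_li (F : Type*) [Field F] {ι : Type*} (g : MvPolynomial (Fin 2) F)
    (hg : g ≠ 0) (e : ι → (Fin 2 →₀ ℕ)) (he : Function.Injective e) :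
    LinearIndependent F fun a : ι => g * MvPolynomial.monomial (e a) (1 : F) := by
  have h1 : LinearIndependent F (fun d : Fin 2 →₀ ℕ => MvPolynomial.monomial d (1 : F)) := by
    have := (MvPolynomial.basisMonomials (Fin 2) F).linearIndependent
    rwa [MvPolynomial.coe_basisMonomials] at this
  have h2 := h1.comp e he
  have h3 := h2.map' (LinearMap.mulLeft F g)
    (LinearMap.ker_eq_bot.2 (mul_right_injective₀ hg))
  exact h3

open MvPolynomial in
private lemma BA.hne (F : Type*) [Field F] : (X 0 + X 1 : MvPolynomial (Fin 2) F) ≠ 0 := by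
  intro h
  have := congrArg (MvPolynomial.eval ![(1:F), 0]) h
  simp at this

open MvPolynomial Finsupp in
private lemma BA.mono_eq (F : Type*) [Field F] (a b : ℕ) :
    (X 0 : MvPolynomial (Fin 2) F) ^ a * X 1 ^ b
      = MvPolynomial.monomial (Finsupp.single 0 a + Finsupp.single 1 b) (1 : F) := by
  rw [X_pow_eq_monomial, X_pow_eq_monomial, monomial_mul, one_mul]

open Finsupp in
private lemma BA.e_inj (a b a' b' : ℕ)
    (h : Finsupp.single (0 : Fin 2) a + Finsupp.single 1 b
       = Finsupp.single 0 a' + Finsupp.single 1 b') : a = a' ∧ b = b' := by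
  constructor
  · have := DFunLike.congr_fun h 0
    simpa [Finsupp.single_apply] using this
  · have := DFunLike.congr_fun h 1
    simpa [Finsupp.single_apply] using this

open MvPolynomial in
/-- In `F[x,y,z]`, the polynomials `P_{(r,s,t)} = (x-y)^r (y-z)^s (z-x)^t`
indexed by locations of `Δ_N` are linearly independent along every line of
`Δ_N`, and linearly dependent over every black 3-clique of `Δ_N`; i.e., the
map `λ ↦ P_λ` is a Concrete Billiard Array. -/
theorem stmt19 (F : Type*) [Field F] (N : ℕ) (hN : 1 ≤ N) :
    (∀ L : Set (Fin 3 → ℕ), BA.IsLine N L →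
      LinearIndependent F fun x : L => BA.P F x.1) ∧
    (∀ r s t : ℕ, r + s + t + 1 = N →
      ¬ LinearIndependent F fun x : BA.blackSet r s t => BA.P F x.1) := by
  constructor
  · rintro L ⟨η, c, hc, rfl⟩
    fin_cases η
    · show LinearIndependent F fun x : {v ∈ BA.Delta N | v 0 = c} => BA.P F x.1
      apply LinearIndependent.of_comp
        (MvPolynomial.aeval (![0, X 0 + X 1, X 1] : Fin 3 → MvPolynomial (Fin 2) F)).toLinearMap
      have key : (⇑(MvPolynomial.aeval (![0, X 0 + X 1, X 1] : Fin 3 → MvPolynomial (Fin 2) F)).toLinearMap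
          ∘ fun x : {v ∈ BA.Delta N | v 0 = c} => BA.P F x.1)
          = fun x => (-(X 0 + X 1)) ^ c *
              MvPolynomial.monomial (Finsupp.single 0 (x.1 1) + Finsupp.single 1 (x.1 2)) (1 : F) := by
        funext x
        obtain ⟨hv, hvc⟩ := x.2
        simp only [Function.comp_apply, AlgHom.toLinearMap_apply, BA.P, map_mul, map_pow, map_sub,
          MvPolynomial.aeval_X, Matrix.cons_val_zero, Matrix.cons_val_one, Matrix.head_cons,
          Matrix.cons_val_two, Matrix.tail_cons]
        rw [hvc, ← BA.mono_eq]
        ring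
      rw [key]
      apply BA.aux_li F _ (pow_ne_zero _ (neg_ne_zero.2 (BA.hne F)))
      intro v w h
      obtain ⟨h1, h2⟩ := BA.e_inj _ _ _ _ h
      obtain ⟨hv, hvc⟩ := v.2
      obtain ⟨hw, hwc⟩ := w.2
      apply Subtype.ext; funext k
      fin_cases k
      · exact hvc.trans hwc.symm
      · exact h1
      · exact h2
    · show LinearIndependent F fun x : {v ∈ BA.Delta N | v 1 = c} => BA.P F x.1
      apply LinearIndependent.of_comp
        (MvPolynomial.aeval (![X 0, 0, X 0 + X 1] : Fin 3 → MvPolynomial (Fin 2) F)).toLinearMap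
      have key : (⇑(MvPolynomial.aeval (![X 0, 0, X 0 + X 1] : Fin 3 → MvPolynomial (Fin 2) F)).toLinearMap
          ∘ fun x : {v ∈ BA.Delta N | v 1 = c} => BA.P F x.1)
          = fun x => (-(X 0 + X 1)) ^ c *
              MvPolynomial.monomial (Finsupp.single 0 (x.1 0) + Finsupp.single 1 (x.1 2)) (1 : F) := by
        funext x
        obtain ⟨hv, hvc⟩ := x.2
        simp only [Function.comp_apply, AlgHom.toLinearMap_apply, BA.P, map_mul, map_pow, map_sub,
          MvPolynomial.aeval_X, Matrix.cons_val_zero, Matrix.cons_val_one, Matrix.head_cons,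
          Matrix.cons_val_two, Matrix.tail_cons]
        rw [hvc, ← BA.mono_eq]
        ring
      rw [key]
      apply BA.aux_li F _ (pow_ne_zero _ (neg_ne_zero.2 (BA.hne F)))
      intro v w h
      obtain ⟨h1, h2⟩ := BA.e_inj _ _ _ _ h
      obtain ⟨hv, hvc⟩ := v.2
      obtain ⟨hw, hwc⟩ := w.2
      apply Subtype.ext; funext k
      fin_cases k
      · exact h1
      · exact hvc.trans hwc.symm
      · exact h2
    · show LinearIndependent F fun x : {v ∈ BA.Delta N | v 2 = c} => BA.P F x.1
      apply LinearIndependent.of_comp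
        (MvPolynomial.aeval (![X 0 + X 1, X 1, 0] : Fin 3 → MvPolynomial (Fin 2) F)).toLinearMap
      have key : (⇑(MvPolynomial.aeval (![X 0 + X 1, X 1, 0] : Fin 3 → MvPolynomial (Fin 2) F)).toLinearMap
          ∘ fun x : {v ∈ BA.Delta N | v 2 = c} => BA.P F x.1)
          = fun x => (-(X 0 + X 1)) ^ c *
              MvPolynomial.monomial (Finsupp.single 0 (x.1 0) + Finsupp.single 1 (x.1 1)) (1 : F) := by
        funext x
        obtain ⟨hv, hvc⟩ := x.2
        simp only [Function.comp_apply, AlgHom.toLinearMap_apply, BA.P, map_mul, map_pow, map_sub,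
          MvPolynomial.aeval_X, Matrix.cons_val_zero, Matrix.cons_val_one, Matrix.head_cons,
          Matrix.cons_val_two, Matrix.tail_cons]
        rw [hvc, ← BA.mono_eq]
        ring
      rw [key]
      apply BA.aux_li F _ (pow_ne_zero _ (neg_ne_zero.2 (BA.hne F)))
      intro v w h
      obtain ⟨h1, h2⟩ := BA.e_inj _ _ _ _ h
      obtain ⟨hv, hvc⟩ := v.2
      obtain ⟨hw, hwc⟩ := w.2
      apply Subtype.ext; funext k
      fin_cases k
      · exact h1
      · exact h2
      · exact hvc.trans hwc.symm
  · intro r s t hrst h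
    have ha : ![r + 1, s, t] ∈ BA.blackSet r s t := by simp [BA.blackSet]
    have hb : ![r, s + 1, t] ∈ BA.blackSet r s t := by simp [BA.blackSet]
    have hc : ![r, s, t + 1] ∈ BA.blackSet r s t := by simp [BA.blackSet]
    set g : Fin 3 → BA.blackSet r s t := ![⟨_, ha⟩, ⟨_, hb⟩, ⟨_, hc⟩] with hg
    have hginj : Function.Injective g := by
      intro i j hij
      fin_cases i <;> fin_cases j <;> simp_all [g, Subtype.ext_iff] <;>
        (exfalso
         have h0 := congrFun hij 0
         have h1 := congrFun hij 1
         simp at h0 h1)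
    have h2 := h.comp g hginj
    rw [Fintype.linearIndependent_iff] at h2
    have h3 := h2 (fun _ => (1 : F)) ?_ 0
    · exact one_ne_zero h3
    · have := BA.black_sum F r s t
      simp only [Fin.sum_univ_three, one_smul, hg]
      simpa [g] using this
end
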